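/- arXiv:2512.04531 — 5 statements merged into one kernel-verified Lean document; each statement's English description precedes it below -/
import Mathlib

section
/- Let G, H be countable groups, G ↷ (X,μ) a pmp action, c : G × X → H a cocycle, and let {G_k}_{k≥1} be an increasing sequence of subgroups of G with G = ⋃_k G_k. Then c is amenable if and only if the restriction c|(G_k × X) is amenable for every k ≥ 1. -/
open MeasureTheory Filter Topology

/-- `ℓ¹` probability vectors on `H` (the space `P(H)`). -/
def IsProbVec {H : Type*} (p : H → ℝ) : Prop :=
  (∀ h, 0 ≤ p h) ∧ ∑' h, p h = 1

/-- The `ℓ¹` distance between two vectors. -/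
noncomputable def l1dist {H : Type*} (p q : H → ℝ) : ℝ := ∑' h, |p h - q h|

/-- The left translation action of `H` on `ℓ¹(H)`. -/
def lshift {H : Type*} [Group H] (h : H) (p : H → ℝ) : H → ℝ := fun k => p (h⁻¹ * k)

/-- A cocycle `c` for an action `σ` of `Γ` on `(X, μ)`, with values in a countable group `H`,
is *amenable* if there are Borel maps `φₙ : X → P(H)` with
`‖φₙ(gx) − c(g,x)·φₙ(x)‖₁ → 0` for every `g ∈ Γ` and a.e. `x ∈ X`. -/
def AmenableCocycle {Γ H X : Type*} [Group H] [MeasurableSpace X]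
    (μ : Measure X) (σ : Γ → X → X) (c : Γ → X → H) : Prop :=
  ∃ φ : ℕ → X → H → ℝ,
    (∀ n h, Measurable fun x => φ n x h) ∧
    (∀ n x, IsProbVec (φ n x)) ∧
    ∀ g : Γ, ∀ᵐ x ∂μ,
      Tendsto (fun n => l1dist (φ n (σ g x)) (lshift (c g x) (φ n x))) atTop (𝓝 0)

/-- A cocycle `c` for an action `σ` of `Γ` on `(X, μ)` is *essentially trivial* if there is a
Borel map `φ : X → F(H)` into finite nonempty subsets of `H` with `φ(gx) = c(g,x)·φ(x)`
for every `g ∈ Γ` and a.e. `x ∈ X`. -/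
def EssTrivialCocycle {Γ H X : Type*} [Group H] [MeasurableSpace X]
    (μ : Measure X) (σ : Γ → X → X) (c : Γ → X → H) : Prop :=
  ∃ φ : X → Finset H,
    (∀ F : Finset H, MeasurableSet {x | φ x = F}) ∧
    (∀ x, (φ x).Nonempty) ∧
    ∀ g : Γ, ∀ᵐ x ∂μ, (φ (σ g x) : Set H) = (fun h => c g x * h) '' (φ x : Set H)
lemma tsum_nonneg_eq_toReal {ι : Type*} (f : ι → ℝ) (hf : ∀ i, 0 ≤ f i) :
    ∑' i, f i = (∑' i, ENNReal.ofReal (f i)).toReal := by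
  by_cases h : Summable f
  · rw [← ENNReal.ofReal_tsum_of_nonneg hf h, ENNReal.toReal_ofReal (tsum_nonneg hf)]
  · rw [tsum_eq_zero_of_not_summable h]
    by_cases h' : ∑' i, ENNReal.ofReal (f i) = ⊤
    · rw [h', ENNReal.toReal_top]
    · exfalso
      have := ENNReal.summable_toReal h'
      simp only [ENNReal.toReal_ofReal (hf _)] at this
      exact h this

lemma measurable_comp_countable'' {X H : Type*} [MeasurableSpace X] [Countable H]
    [MeasurableSpace H] [MeasurableSingletonClass H] {F : X → H → ℝ}
    (hF : ∀ h, Measurable fun x => F x h) {u : X → H} (hu : Measurable u) :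
    Measurable fun x => F x (u x) := by
  have : Measurable fun p : X × H => F p.1 p.2 :=
    measurable_from_prod_countable_left (fun h => hF h)
  exact this.comp (measurable_id.prodMk hu)


/-- For a pmp action `G ↷ (X,μ)`, a cocycle `c : G × X → H` and an increasing
sequence of subgroups `G_k` with `G = ⋃_k G_k`, the cocycle `c` is amenable if and only if its
restriction to each `G_k × X` is amenable. -/
theorem amenableCocycle_iff_restrictions
    {G H X : Type*} [Group G] [Countable G] [Group H] [Countable H]
    [MeasurableSpace H] [MeasurableSingletonClass H]
    [MeasurableSpace X] (μ : Measure X) [IsProbabilityMeasure μ]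
    [MulAction G X] (hsmul_meas : ∀ g : G, Measurable fun x : X => g • x)
    [SMulInvariantMeasure G X μ]
    (c : G → X → H) (hc_meas : ∀ g : G, Measurable (c g))
    (hc_cocycle : ∀ g₁ g₂ : G, ∀ᵐ x ∂μ, c (g₁ * g₂) x = c g₁ (g₂ • x) * c g₂ x)
    (Gk : ℕ → Subgroup G) (h_mono : Monotone Gk) (h_union : ⋃ k, (Gk k : Set G) = Set.univ) :
    AmenableCocycle μ (fun (g : G) (x : X) => g • x) c ↔
      ∀ k : ℕ, AmenableCocycle μ (fun (g : Gk k) (x : X) => (g : G) • x)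
        (fun (g : Gk k) x => c (g : G) x) := by
  constructor
  · rintro ⟨φ, hφm, hφp, hφt⟩ k
    exact ⟨φ, hφm, hφp, fun g => hφt (g : G)⟩
  · intro hres
    choose Φ hΦm hΦp hΦt using hres
    obtain ⟨f, hf⟩ := exists_surjective_nat G
    have hidx : ∀ g : G, ∃ k, g ∈ Gk k := by
      intro g
      have : g ∈ ⋃ k, (Gk k : Set G) := h_union.symm ▸ Set.mem_univ g
      exact Set.mem_iUnion.1 this
    choose idx hidxmem using hidx
    set K : ℕ → ℕ := fun n => (Finset.range (n + 1)).sup fun i => idx (f i) with hK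
    -- the distance functions
    set D : ℕ → ℕ → G → X → ℝ := fun k m g x =>
      l1dist (Φ k m (g • x)) (lshift (c g x) (Φ k m x)) with hD
    have hDnonneg : ∀ k m g x, 0 ≤ D k m g x := fun k m g x =>
      tsum_nonneg fun h => abs_nonneg _
    have hDmeas : ∀ k m g, Measurable (D k m g) := by
      intro k m g
      have key : ∀ h : H, Measurable fun x =>
          |Φ k m (g • x) h - Φ k m x ((c g x)⁻¹ * h)| := by
        intro h
        have h1 : Measurable fun x => Φ k m (g • x) h :=
          (hΦm k m h).comp (hsmul_meas g)
        have hu : Measurable fun x => (c g x)⁻¹ * h := by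
          apply measurable_to_countable'
          intro h'
          have : (fun x => (c g x)⁻¹ * h) ⁻¹' {h'} = c g ⁻¹' {h * h'⁻¹} := by
            ext x
            simp only [Set.mem_preimage, Set.mem_singleton_iff]
            constructor
            · intro hx; rw [← hx]; group
            · intro hx; rw [hx]; group
          rw [this]
          exact hc_meas g (measurableSet_singleton _)
        have h2 : Measurable fun x => Φ k m x ((c g x)⁻¹ * h) :=
          measurable_comp_countable'' (hΦm k m) hu
        exact (h1.sub h2).abs
      have : D k m g = fun x =>
          (∑' h, ENNReal.ofReal |Φ k m (g • x) h - Φ k m x ((c g x)⁻¹ * h)|).toReal := by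
        funext x
        exact tsum_nonneg_eq_toReal _ fun h => abs_nonneg _
      rw [this]
      exact (Measurable.ennreal_tsum fun h =>
        ENNReal.measurable_ofReal.comp (key h)).ennreal_toReal
    -- choose good times m n
    have hmain : ∀ n : ℕ, ∃ m : ℕ, ∀ i ≤ n,
        μ {x | 1 / ((n : ℝ) + 1) ≤ dist (D (K n) m (f i) x) 0} < (2⁻¹ : ENNReal) ^ n := by
      intro n
      have hev : ∀ i ≤ n, ∀ᶠ m in atTop,
          μ {x | 1 / ((n : ℝ) + 1) ≤ dist (D (K n) m (f i) x) 0} < (2⁻¹ : ENNReal) ^ n := by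
        intro i hi
        have hg : f i ∈ Gk (K n) := by
          have : idx (f i) ≤ (Finset.range (n + 1)).sup fun j => idx (f j) :=
            Finset.le_sup (f := fun j => idx (f j)) (Finset.mem_range.2 (Nat.lt_succ_of_le hi))
          exact h_mono this (hidxmem (f i))
        have hae : ∀ᵐ x ∂μ,
            Tendsto (fun m => D (K n) m (f i) x) atTop (𝓝 0) := hΦt (K n) ⟨f i, hg⟩
        have htm : TendstoInMeasure μ (fun m => D (K n) m (f i)) atTop (fun _ => (0 : ℝ)) :=
          tendstoInMeasure_of_tendsto_ae
            (fun m => ((hDmeas (K n) m (f i)).aestronglyMeasurable)) hae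
        have hε : (0 : ℝ) < 1 / ((n : ℝ) + 1) := by positivity
        have := tendstoInMeasure_iff_dist.1 htm _ hε
        exact this.eventually_lt_const (ENNReal.pow_pos (by norm_num) n)
      have : ∀ᶠ m in atTop, ∀ i ∈ Finset.range (n + 1),
          μ {x | 1 / ((n : ℝ) + 1) ≤ dist (D (K n) m (f i) x) 0} < (2⁻¹ : ENNReal) ^ n := by
        rw [eventually_all_finset]
        intro i hi
        exact hev i (Nat.lt_succ_iff.1 (Finset.mem_range.1 hi))
      obtain ⟨m, hm⟩ := this.exists
      exact ⟨m, fun i hi => hm i (Finset.mem_range.2 (Nat.lt_succ_of_le hi))⟩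
    choose m hm using hmain
    refine ⟨fun n => Φ (K n) (m n), fun n h => hΦm (K n) (m n) h,
      fun n x => hΦp (K n) (m n) x, ?_⟩
    intro g
    obtain ⟨i, rfl⟩ := hf g
    set E : ℕ → Set X := fun n =>
      {x | 1 / ((n : ℝ) + 1) ≤ dist (D (K n) (m n) (f i) x) 0} with hE
    have hsum : ∑' n, μ (E n) ≠ ⊤ := by
      have hbound : ∀ n, μ (E n) ≤ 2 ^ i * (2⁻¹ : ENNReal) ^ n := by
        intro n
        rcases le_or_gt i n with h | h
        · calc μ (E n) ≤ (2⁻¹ : ENNReal) ^ n := (hm n i h).le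
            _ ≤ 2 ^ i * (2⁻¹ : ENNReal) ^ n := by
              conv_lhs => rw [← one_mul ((2⁻¹ : ENNReal) ^ n)]
              gcongr
              exact one_le_pow_of_one_le' one_le_two i
        · calc μ (E n) ≤ 1 := prob_le_one
            _ ≤ 2 ^ i * (2⁻¹ : ENNReal) ^ n := by
              have : (2⁻¹ : ENNReal) ^ i ≤ (2⁻¹ : ENNReal) ^ n :=
                pow_le_pow_of_le_one (zero_le) (by simp) h.le
              calc (1 : ENNReal) = 2 ^ i * (2⁻¹ : ENNReal) ^ i := by
                    rw [← mul_pow, ENNReal.mul_inv_cancel (by norm_num) (by norm_num), one_pow]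
                _ ≤ 2 ^ i * (2⁻¹ : ENNReal) ^ n := by gcongr
      refine ne_top_of_le_ne_top ?_ (ENNReal.tsum_le_tsum hbound)
      rw [ENNReal.tsum_mul_left, ENNReal.tsum_geometric]
      have : (1 - 2⁻¹ : ENNReal)⁻¹ = 2 := by
        rw [ENNReal.one_sub_inv_two]; simp
      rw [this]
      exact ENNReal.mul_ne_top (by simp) (by simp)
    have hfin := ae_finite_setOf_mem hsum
    filter_upwards [hfin] with x hx
    have hev : ∀ᶠ n in atTop, x ∉ E n := by
      rw [← Nat.cofinite_eq_atTop]
      exact hx.eventually_cofinite_notMem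
    refine squeeze_zero' ?_ ?_ tendsto_one_div_add_atTop_nhds_zero_nat
    · exact Eventually.of_forall fun n => hDnonneg (K n) (m n) (f i) x
    · filter_upwards [hev] with n hn
      have : dist (D (K n) (m n) (f i) x) 0 < 1 / ((n : ℝ) + 1) := by
        by_contra hcon
        exact hn (not_lt.1 hcon)
      rw [Real.dist_eq, sub_zero, abs_of_nonneg (hDnonneg _ _ _ _)] at this
      exact this.le
end

section
/- Let G, H be countable groups, G ↷ (X,μ) a pmp action, and c : G × X → H a cocycle. Suppose H = ⋃_{k≥1} H_k for an increasing sequence of subgroups H_k such that for each k there is a subgroup H_k' with H = H_k × H_k', and let p_k : H → H_k be the projection. If p_k ∘ c : G × X → H_k is an amenable cocycle for every k ≥ 1, then c is amenable. -/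
open MeasureTheory Filter Topology

open scoped ENNReal

namespace AmenHelp

variable {H : Type*}

lemma probVec_summable {p : H → ℝ} (hp : IsProbVec p) : Summable p := by
  by_contra hs
  have := tsum_eq_zero_of_not_summable hs
  rw [hp.2] at this; norm_num at this

lemma lshift_probVec [Group H] {p : H → ℝ} (hp : IsProbVec p) (h : H) :
    IsProbVec (lshift h p) := by
  constructor
  · intro k; exact hp.1 _
  · have := (Equiv.mulLeft h).tsum_eq (fun k => p (h⁻¹ * k))
    simp only [Equiv.coe_mulLeft, inv_mul_cancel_left] at this
    unfold lshift
    rw [← this]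
    simpa using hp.2

lemma summable_abs_sub {p q : H → ℝ} (hp : IsProbVec p) (hq : IsProbVec q) :
    Summable fun h => |p h - q h| := by
  refine Summable.of_nonneg_of_le (fun h => abs_nonneg _) (fun h => ?_)
    ((probVec_summable hp).add (probVec_summable hq))
  calc |p h - q h| ≤ |p h| + |q h| := abs_sub _ _
  _ = p h + q h := by rw [abs_of_nonneg (hp.1 h), abs_of_nonneg (hq.1 h)]

lemma l1dist_nonneg {p q : H → ℝ} : 0 ≤ l1dist p q :=
  tsum_nonneg fun h => abs_nonneg _

lemma l1dist_le_two {p q : H → ℝ} (hp : IsProbVec p) (hq : IsProbVec q) :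
    l1dist p q ≤ 2 := by
  have h1 : l1dist p q ≤ ∑' h, (p h + q h) := by
    refine Summable.tsum_le_tsum (fun h => ?_) (summable_abs_sub hp hq) ((probVec_summable hp).add (probVec_summable hq))
    calc |p h - q h| ≤ |p h| + |q h| := abs_sub _ _
    _ = p h + q h := by rw [abs_of_nonneg (hp.1 h), abs_of_nonneg (hq.1 h)]
  have h2 : ∑' h, (p h + q h) = 2 := by
    rw [Summable.tsum_add (probVec_summable hp) (probVec_summable hq), hp.2, hq.2]; norm_num
  linarith

lemma ofReal_l1dist {p q : H → ℝ} (hp : IsProbVec p) (hq : IsProbVec q) :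
    ENNReal.ofReal (l1dist p q) = ∑' h, ENNReal.ofReal |p h - q h| :=
  ENNReal.ofReal_tsum_of_nonneg (fun h => abs_nonneg _) (summable_abs_sub hp hq)

lemma measurable_comp_countable {X : Type*} [MeasurableSpace X] [Countable H]
    [MeasurableSpace H] [MeasurableSingletonClass H]
    {φ : X → H → ℝ} (hφ : ∀ h, Measurable fun x => φ x h)
    {f : X → H} (hf : Measurable f) : Measurable fun x => φ x (f x) := by
  intro s hs
  have : (fun x => φ x (f x)) ⁻¹' s = ⋃ h : H, ({x | f x = h} ∩ ((fun x => φ x h) ⁻¹' s)) := by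
    ext x
    simp only [Set.mem_preimage, Set.mem_iUnion, Set.mem_inter_iff, Set.mem_setOf_eq]
    constructor
    · intro hx; exact ⟨f x, rfl, hx⟩
    · rintro ⟨h, rfl, hx⟩; exact hx
  rw [this]
  exact MeasurableSet.iUnion fun h =>
    ((hf (measurableSet_singleton h)).inter (hφ h hs))

end AmenHelp

namespace AmenHelp

lemma measurable_D {X H : Type*} [MeasurableSpace X] [Group H] [Countable H]
    [MeasurableSpace H] [MeasurableSingletonClass H]
    (φ ψ : X → H → ℝ) (hφ : ∀ h, Measurable fun x => φ x h)
    (hψ : ∀ h, Measurable fun x => ψ x h)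
    (hφp : ∀ x, IsProbVec (φ x)) (hψp : ∀ x, IsProbVec (ψ x))
    (q : X → H) (hq : Measurable q) :
    Measurable fun x => ENNReal.ofReal (l1dist (ψ x) (lshift (q x) (φ x))) := by
  have heq : (fun x => ENNReal.ofReal (l1dist (ψ x) (lshift (q x) (φ x))))
      = fun x => ∑' h, ENNReal.ofReal |ψ x h - φ x ((q x)⁻¹ * h)| := by
    funext x
    exact ofReal_l1dist (hψp x) (lshift_probVec (hφp x) _)
  rw [heq]
  refine Measurable.ennreal_tsum fun h => Measurable.ennreal_ofReal (Measurable.abs ?_)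
  refine (hψ h).sub ?_
  exact measurable_comp_countable hφ
    ((measurable_of_countable (fun a : H => a⁻¹ * h)).comp hq : Measurable fun x => (q x)⁻¹ * h)

end AmenHelp


open AmenHelp

/-- Suppose `H = ⋃_k H_k` for an increasing sequence of subgroups such that
`H = H_k × H_k'` (internal direct product) for each `k`, with projections `p_k : H → H_k`.
If `p_k ∘ c` is an amenable cocycle for every `k`, then `c` is amenable. -/
theorem amenableCocycle_of_projections_amenable
    {G H X : Type*} [Group G] [Countable G] [Group H] [Countable H]
    [MeasurableSpace H] [MeasurableSingletonClass H]
    [MeasurableSpace X] (μ : Measure X) [IsProbabilityMeasure μ]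
    [MulAction G X] (hsmul_meas : ∀ g : G, Measurable fun x : X => g • x)
    [SMulInvariantMeasure G X μ]
    (c : G → X → H) (hc_meas : ∀ g : G, Measurable (c g))
    (hc_cocycle : ∀ g₁ g₂ : G, ∀ᵐ x ∂μ, c (g₁ * g₂) x = c g₁ (g₂ • x) * c g₂ x)
    (Hk Hk' : ℕ → Subgroup H) (p : ℕ → H →* H)
    (h_mono : Monotone Hk) (h_union : ⋃ k, (Hk k : Set H) = Set.univ)
    -- `H = H_k × H_k'` as an internal direct product:
    (h_compl : ∀ k, (Hk k).IsComplement' (Hk' k))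
    (h_comm : ∀ k, ∀ a ∈ Hk k, ∀ b ∈ Hk' k, Commute a b)
    -- `p k` is the corresponding projection onto `H_k`:
    (hp_mem : ∀ k (h : H), p k h ∈ Hk k)
    (hp_proj : ∀ k (h : H), (p k h)⁻¹ * h ∈ Hk' k)
    (h_amen : ∀ k, AmenableCocycle μ (fun (g : G) (x : X) => g • x)
        (fun g x => p k (c g x))) :
    AmenableCocycle μ (fun (g : G) (x : X) => g • x) c := by
  classical
  choose φ hφmeas hφprob hφconv using h_amen
  -- `p k` fixes elements of `Hk k`
  have hp_fix : ∀ k (h : H), h ∈ Hk k → p k h = h := by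
    intro k h hh
    have h1 : (p k h)⁻¹ * h ∈ Hk k := mul_mem (inv_mem (hp_mem k h)) hh
    have h2 : (p k h)⁻¹ * h = 1 :=
      Subgroup.disjoint_def.mp (h_compl k).disjoint h1 (hp_proj k h)
    exact inv_mul_eq_one.mp h2
  -- the ENNReal-valued defect functions
  set D : ℕ → ℕ → G → X → ℝ≥0∞ := fun k n g x =>
    ENNReal.ofReal (l1dist (φ k n (g • x)) (lshift (c g x) (φ k n x))) with hD_def
  set D' : ℕ → ℕ → G → X → ℝ≥0∞ := fun k n g x =>
    ENNReal.ofReal (l1dist (φ k n (g • x)) (lshift (p k (c g x)) (φ k n x))) with hD'_def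
  have hDmeas : ∀ k n g, Measurable (D k n g) := by
    intro k n g
    exact measurable_D (φ k n) (fun x => φ k n (g • x)) (hφmeas k n)
      (fun h => (hφmeas k n h).comp (hsmul_meas g)) (hφprob k n)
      (fun x => hφprob k n _) (c g) (hc_meas g)
  have hD'meas : ∀ k n g, Measurable (D' k n g) := by
    intro k n g
    exact measurable_D (φ k n) (fun x => φ k n (g • x)) (hφmeas k n)
      (fun h => (hφmeas k n h).comp (hsmul_meas g)) (hφprob k n)
      (fun x => hφprob k n _) (fun x => p k (c g x))
      ((measurable_of_countable (p k)).comp (hc_meas g))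
  have hDle2 : ∀ k n g x, D k n g x ≤ 2 := by
    intro k n g x
    calc D k n g x ≤ ENNReal.ofReal 2 :=
          ENNReal.ofReal_le_ofReal
            (l1dist_le_two (hφprob k n _) (lshift_probVec (hφprob k n x) _))
    _ = 2 := by norm_num
  have hD'le2 : ∀ k n g x, D' k n g x ≤ 2 := by
    intro k n g x
    calc D' k n g x ≤ ENNReal.ofReal 2 :=
          ENNReal.ofReal_le_ofReal
            (l1dist_le_two (hφprob k n _) (lshift_probVec (hφprob k n x) _))
    _ = 2 := by norm_num
  -- the sets where the cocycle lies in `Hk k`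
  set A : G → ℕ → Set X := fun g k => c g ⁻¹' (Hk k : Set H) with hA_def
  have hA_meas : ∀ g k, MeasurableSet (A g k) :=
    fun g k => hc_meas g (Set.to_countable _).measurableSet
  have hA_tendsto : ∀ g, Tendsto (fun k => μ (A g k)ᶜ) atTop (𝓝 0) := by
    intro g
    have hanti : Antitone fun k => (A g k)ᶜ := by
      intro k l hkl
      exact Set.compl_subset_compl.mpr fun x hx => h_mono hkl hx
    have hinter : ⋂ k, (A g k)ᶜ = ∅ := by
      rw [← Set.compl_iUnion, Set.compl_empty_iff]
      apply Set.eq_univ_of_forall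
      intro x
      have : c g x ∈ ⋃ k, (Hk k : Set H) := h_union ▸ Set.mem_univ _
      obtain ⟨s, ⟨k, rfl⟩, hk⟩ := this
      exact Set.mem_iUnion.mpr ⟨k, hk⟩
    have := tendsto_measure_iInter_atTop
      (μ := μ) (fun k => ((hA_meas g k).compl).nullMeasurableSet) hanti
      ⟨0, measure_ne_top _ _⟩
    rw [hinter] at this
    simpa [Function.comp_def] using this
  -- the integral bound
  have key : ∀ k n g, ∫⁻ x, D k n g x ∂μ ≤ (∫⁻ x, D' k n g x ∂μ) + 2 * μ (A g k)ᶜ := by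
    intro k n g
    rw [← lintegral_add_compl (D k n g) (hA_meas g k)]
    have h1 : ∫⁻ x in A g k, D k n g x ∂μ = ∫⁻ x in A g k, D' k n g x ∂μ := by
      refine setLIntegral_congr_fun (hA_meas g k) ?_
      intro x hx
      simp only [hD_def, hD'_def, hp_fix k (c g x) hx]
    have h2 : ∫⁻ x in (A g k)ᶜ, D k n g x ∂μ ≤ 2 * μ (A g k)ᶜ := by
      calc ∫⁻ x in (A g k)ᶜ, D k n g x ∂μ ≤ ∫⁻ _ in (A g k)ᶜ, (2:ℝ≥0∞) ∂μ :=
            lintegral_mono fun x => hDle2 k n g x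
      _ = 2 * μ (A g k)ᶜ := setLIntegral_const _ _
    exact add_le_add (h1 ▸ setLIntegral_le_lintegral _ _) h2
  -- the integrals of D' tend to 0
  have hD'lim : ∀ k g, Tendsto (fun n => ∫⁻ x, D' k n g x ∂μ) atTop (𝓝 0) := by
    intro k g
    have h0 : (0:ℝ≥0∞) = ∫⁻ _, (0:ℝ≥0∞) ∂μ := by simp
    rw [h0]
    refine tendsto_lintegral_of_dominated_convergence (bound := fun _ => 2)
      (fun n => hD'meas k n g) (fun n => Filter.Eventually.of_forall (hD'le2 k n g)) ?_ ?_
    · simp [lintegral_const]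
    · filter_upwards [hφconv k g] with x hx
      have := (ENNReal.continuous_ofReal.tendsto 0).comp hx
      simpa [hD'_def, Function.comp_def] using this
  -- enumeration of G
  obtain ⟨e, he⟩ := exists_surjective_nat G
  -- the geometric bound
  set ε : ℕ → ℝ≥0∞ := fun m => 2⁻¹ ^ m with hε_def
  have hεpos : ∀ m, (0:ℝ≥0∞) < ε m := by
    intro m
    apply ENNReal.pow_pos
    simp
  have hεanti : ∀ m j : ℕ, ε (m + j) ≤ ε m := by
    intro m j
    apply pow_le_pow_of_le_one (by simp) (by simp [ENNReal.inv_le_one]) (by omega)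
  have hεsum : ∑' m, (3:ℝ≥0∞) * ε m ≠ ⊤ := by
    rw [ENNReal.tsum_mul_left, hε_def, ENNReal.tsum_geometric, ENNReal.one_sub_inv_two, inv_inv]
    exact ENNReal.mul_ne_top (by norm_num) ENNReal.ofNat_ne_top
  -- diagonal selection
  have hsel : ∀ m : ℕ, ∃ kn : ℕ × ℕ, ∀ j ≤ m,
      (∫⁻ x, D kn.1 kn.2 (e j) x ∂μ) ≤ 3 * ε m := by
    intro m
    have h1 : ∀ j : ℕ, ∃ K, ∀ k ≥ K, μ (A (e j) k)ᶜ < ε m := fun j =>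
      eventually_atTop.mp ((hA_tendsto (e j)).eventually_lt_const (hεpos m))
    choose K hK using h1
    set k0 := (Finset.range (m + 1)).sup K with hk0
    have h2 : ∀ j : ℕ, ∃ N, ∀ n ≥ N, (∫⁻ x, D' k0 n (e j) x ∂μ) < ε m := fun j =>
      eventually_atTop.mp ((hD'lim k0 (e j)).eventually_lt_const (hεpos m))
    choose N hN using h2
    set n0 := (Finset.range (m + 1)).sup N with hn0
    refine ⟨(k0, n0), fun j hj => ?_⟩
    have hjm : j ∈ Finset.range (m + 1) := Finset.mem_range.mpr (by omega)
    have hk : K j ≤ k0 := Finset.le_sup hjm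
    have hn : N j ≤ n0 := Finset.le_sup hjm
    calc (∫⁻ x, D k0 n0 (e j) x ∂μ)
        ≤ (∫⁻ x, D' k0 n0 (e j) x ∂μ) + 2 * μ (A (e j) k0)ᶜ := key k0 n0 (e j)
    _ ≤ ε m + 2 * ε m :=
        add_le_add (le_of_lt (hN j n0 hn)) (mul_le_mul_right (le_of_lt (hK j k0 hk)) 2)
    _ = 3 * ε m := by ring
  choose kn hkn using hsel
  -- the final family
  refine ⟨fun m => φ (kn m).1 (kn m).2, fun m h => hφmeas _ _ h, fun m x => hφprob _ _ x, ?_⟩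
  intro g
  obtain ⟨j, rfl⟩ := he g
  -- summability of integrals along the diagonal
  have hsum : ∑' m : ℕ, ∫⁻ x, D (kn (m + j)).1 (kn (m + j)).2 (e j) x ∂μ ≠ ⊤ := by
    refine ne_top_of_le_ne_top hεsum (ENNReal.tsum_le_tsum fun m => ?_)
    calc (∫⁻ x, D (kn (m + j)).1 (kn (m + j)).2 (e j) x ∂μ)
        ≤ 3 * ε (m + j) := hkn (m + j) j (by omega)
    _ ≤ 3 * ε m := mul_le_mul_right (hεanti m j) 3
  have hae : ∀ᵐ x ∂μ, (∑' m : ℕ, D (kn (m + j)).1 (kn (m + j)).2 (e j) x) < ⊤ := by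
    refine ae_lt_top (Measurable.ennreal_tsum fun m => hDmeas _ _ _) ?_
    rw [lintegral_tsum (fun m => (hDmeas _ _ _).aemeasurable)]
    exact hsum
  filter_upwards [hae] with x hx
  have h0 : Tendsto (fun m => D (kn (m + j)).1 (kn (m + j)).2 (e j) x) atTop (𝓝 0) :=
    ENNReal.tendsto_atTop_zero_of_tsum_ne_top hx.ne
  have h1 : Tendsto (fun m => D (kn m).1 (kn m).2 (e j) x) atTop (𝓝 0) :=
    (tendsto_add_atTop_iff_nat j).mp h0
  have h2 := (ENNReal.tendsto_toReal (by simp : (0:ℝ≥0∞) ≠ ⊤)).comp h1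
  rw [ENNReal.toReal_zero] at h2
  exact h2.congr fun m => ENNReal.toReal_ofReal l1dist_nonneg
end

section
/- Let G < K and H be countable groups, K ↷ (X,μ) a pmp action, c : K × X → H a cocycle, and Y ⊆ X a G-invariant measurable set. If the restriction c|(G × Y) is essentially trivial, then c|(G × Z) is essentially trivial, where Z = ⋃_{k ∈ N_K(G)} kY. -/
open MeasureTheory Filter Topology

/-- Lemma `normalizer` (1). Let `G < K`, `K ↷ (X,μ)` pmp, `c : K × X → H`
a cocycle and `Y ⊆ X` a `G`-invariant measurable set. If `c|(G × Y)` is essentially trivial,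
then so is `c|(G × Z)`, where `Z = ⋃_{k ∈ N_K(G)} kY`. -/
theorem essTrivial_extend_to_normalizer_saturation
    {K H X : Type*} [Group K] [Countable K] [Group H] [Countable H]
    [MeasurableSpace H] [MeasurableSingletonClass H]
    [MeasurableSpace X] (μ : Measure X) [IsProbabilityMeasure μ]
    [MulAction K X] (hsmul_meas : ∀ k : K, Measurable fun x : X => k • x)
    [SMulInvariantMeasure K X μ]
    (G : Subgroup K)
    (c : K → X → H) (hc_meas : ∀ k : K, Measurable (c k))
    (hc_cocycle : ∀ g₁ g₂ : K, ∀ᵐ x ∂μ, c (g₁ * g₂) x = c g₁ (g₂ • x) * c g₂ x)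
    (Y : Set X) (hY_meas : MeasurableSet Y)
    (hY_inv : ∀ g ∈ G, (fun x : X => g • x) ⁻¹' Y = Y)
    (h_triv : EssTrivialCocycle (μ.restrict Y) (fun (g : G) (x : X) => (g : K) • x)
      (fun (g : G) x => c (g : K) x)) :
    EssTrivialCocycle
      (μ.restrict (⋃ k ∈ Subgroup.normalizer (G : Set K), (fun x : X => k • x) '' Y))
      (fun (g : G) (x : X) => (g : K) • x) (fun (g : G) x => c (g : K) x) := by
  classical
  obtain ⟨φ, hφmeas, hφne, hφeq⟩ := h_triv
  haveI : Nonempty ↥(Subgroup.normalizer (G : Set K)) := ⟨⟨1, (Subgroup.normalizer (G : Set K)).one_mem⟩⟩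
  obtain ⟨e, he⟩ := exists_surjective_nat ↥(Subgroup.normalizer (G : Set K))
  -- the predicate: x lies in (e n) • Y
  set p : ℕ → X → Prop := fun n x => (↑(e n) : K)⁻¹ • x ∈ Y with hp_def
  set Z : Set X := ⋃ k ∈ Subgroup.normalizer (G : Set K), (fun x : X => k • x) '' Y with hZ_def
  -- membership in Z
  have himg : ∀ k : K, (fun x : X => k • x) '' Y = (fun x : X => k⁻¹ • x) ⁻¹' Y := by
    intro k
    ext x
    constructor
    · rintro ⟨y, hy, rfl⟩
      simpa [inv_smul_smul] using hy
    · intro hx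
      exact ⟨k⁻¹ • x, hx, smul_inv_smul k x⟩
  have hZmem : ∀ x, x ∈ Z ↔ ∃ n, p n x := by
    intro x
    simp only [hZ_def, Set.mem_iUnion]
    constructor
    · rintro ⟨k, hk, hx⟩
      obtain ⟨n, hn⟩ := he ⟨k, hk⟩
      have hnk : (↑(e n) : K) = k := by rw [hn]
      rw [himg, ← hnk] at hx
      exact ⟨n, hx⟩
    · rintro ⟨n, hn⟩
      exact ⟨↑(e n), (e n).2, by rw [himg]; exact hn⟩
  have hZmeas : MeasurableSet Z := by
    refine MeasurableSet.biUnion (Set.to_countable _) fun k _ => ?_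
    rw [himg]
    exact (hsmul_meas k⁻¹) hY_meas
  have hpmeas : ∀ n, MeasurableSet {x | p n x} := fun n => (hsmul_meas _) hY_meas
  -- invariance of p under G
  have hg'mem : ∀ (n : ℕ) (g : K), g ∈ G → (↑(e n) : K)⁻¹ * g * ↑(e n) ∈ G := by
    intro n g hg
    exact (Subgroup.mem_normalizer_iff''.1 (e n).2 g).1 hg
  have hpinv : ∀ (g : K), g ∈ G → ∀ n x, p n (g • x) ↔ p n x := by
    intro g hg n x
    have hkey : (↑(e n) : K)⁻¹ • (g • x) = ((↑(e n) : K)⁻¹ * g * ↑(e n)) • ((↑(e n) : K)⁻¹ • x) := by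
      rw [smul_smul, smul_smul]
      congr 1
      group
    simp only [hp_def]
    rw [hkey]
    exact Set.ext_iff.1 (hY_inv _ (hg'mem n g hg)) ((↑(e n) : K)⁻¹ • x)
  -- the extended map
  set ψ : X → Finset H := fun x =>
    if hx : ∃ n, p n x then
      (φ ((↑(e (Nat.find hx)) : K)⁻¹ • x)).image
        (fun h => c (↑(e (Nat.find hx))) ((↑(e (Nat.find hx)) : K)⁻¹ • x) * h)
    else {1} with hψ_def
  refine ⟨ψ, ?_, ?_, ?_⟩
  · -- measurability
    intro F
    set f : ℕ → X → Finset H := fun n x =>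
      (φ ((↑(e n) : K)⁻¹ • x)).image (fun h => c (↑(e n)) ((↑(e n) : K)⁻¹ • x) * h) with hf_def
    have hfmeas : ∀ n, MeasurableSet {x | f n x = F} := by
      intro n
      have hrw : {x | f n x = F} = ⋃ q : H × Finset H,
          ({x | c (↑(e n)) ((↑(e n) : K)⁻¹ • x) = q.1} ∩
            {x | φ ((↑(e n) : K)⁻¹ • x) = q.2}) ∩
            {_x : X | q.2.image (fun h => q.1 * h) = F} := by
        ext x
        simp only [Set.mem_iUnion, Set.mem_inter_iff, Set.mem_setOf_eq]
        constructor
        · intro h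
          exact ⟨⟨c (↑(e n)) ((↑(e n) : K)⁻¹ • x), φ ((↑(e n) : K)⁻¹ • x)⟩, ⟨rfl, rfl⟩, h⟩
        · rintro ⟨q, ⟨h1, h2⟩, h3⟩
          simp only [hf_def]
          rw [h1, h2]
          exact h3
      rw [hrw]
      refine MeasurableSet.iUnion fun q => ?_
      refine MeasurableSet.inter (MeasurableSet.inter ?_ ?_) (MeasurableSet.const _)
      · exact ((hc_meas _).comp (hsmul_meas _)) (measurableSet_singleton q.1)
      · exact (hsmul_meas _) (hφmeas q.2)
    have hrw : {x | ψ x = F} =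
        (⋃ n, ({x | p n x} ∩ (⋂ m, ⋂ _ : m < n, {x | p m x}ᶜ)) ∩ {x | f n x = F}) ∪
          ((⋂ n, {x | p n x}ᶜ) ∩ {_x : X | ({1} : Finset H) = F}) := by
      ext x
      simp only [Set.mem_union, Set.mem_iUnion, Set.mem_inter_iff, Set.mem_iInter,
        Set.mem_compl_iff, Set.mem_setOf_eq]
      by_cases hx : ∃ n, p n x
      · simp only [hψ_def, dif_pos hx]
        constructor
        · intro h
          exact Or.inl ⟨Nat.find hx, ⟨Nat.find_spec hx, fun m hm => Nat.find_min hx hm⟩, h⟩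
        · rintro (⟨n, ⟨hn, hmin⟩, hF⟩ | ⟨hall, _⟩)
          · have : Nat.find hx = n := by
              refine le_antisymm (Nat.find_le hn) ?_
              by_contra hlt
              exact hmin _ (lt_of_not_ge hlt) (Nat.find_spec hx)
            rw [this]
            exact hF
          · exact absurd hx (by push_neg; exact hall)
      · simp only [hψ_def, dif_neg hx]
        push_neg at hx
        constructor
        · intro h
          exact Or.inr ⟨hx, h⟩
        · rintro (⟨n, ⟨hn, _⟩, _⟩ | ⟨_, h⟩)
          · exact absurd hn (hx n)
          · exact h
    rw [hrw]
    refine MeasurableSet.union ?_ ?_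
    · refine MeasurableSet.iUnion fun n => MeasurableSet.inter (MeasurableSet.inter (hpmeas n) ?_) (hfmeas n)
      exact MeasurableSet.iInter fun m => MeasurableSet.iInter fun _ => (hpmeas m).compl
    · exact MeasurableSet.inter (MeasurableSet.iInter fun n => (hpmeas n).compl)
        (MeasurableSet.const _)
  · -- nonempty
    intro x
    simp only [hψ_def]
    split
    · exact Finset.Nonempty.image (hφne _) _
    · exact Finset.singleton_nonempty 1
  · -- equivariance
    intro g
    -- pull back a.e. statements along k⁻¹ • ·
    have pull : ∀ (k : K) (pr : X → Prop), (∀ᵐ y ∂μ, pr y) → ∀ᵐ x ∂μ, pr (k⁻¹ • x) := by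
      intro k pr hpr
      rw [ae_iff] at hpr ⊢
      have : {x | ¬ pr (k⁻¹ • x)} = (fun x : X => k⁻¹ • x) ⁻¹' {y | ¬ pr y} := rfl
      rw [this]
      exact measure_preimage_smul_null hpr k⁻¹
    have E1 : ∀ n : ℕ, ∀ᵐ x ∂μ,
        c (↑(e n) * ((↑(e n) : K)⁻¹ * ↑g * ↑(e n))) ((↑(e n) : K)⁻¹ • x) =
          c (↑(e n)) (((↑(e n) : K)⁻¹ * ↑g * ↑(e n)) • ((↑(e n) : K)⁻¹ • x)) *
            c ((↑(e n) : K)⁻¹ * ↑g * ↑(e n)) ((↑(e n) : K)⁻¹ • x) := fun n =>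
      pull _ _ (hc_cocycle _ _)
    have E2 : ∀ n : ℕ, ∀ᵐ x ∂μ,
        c (↑g * ↑(e n)) ((↑(e n) : K)⁻¹ • x) =
          c (↑g) ((↑(e n) : K) • ((↑(e n) : K)⁻¹ • x)) * c (↑(e n)) ((↑(e n) : K)⁻¹ • x) :=
      fun n => pull _ _ (hc_cocycle _ _)
    have E3 : ∀ n : ℕ, ∀ᵐ x ∂μ, (↑(e n) : K)⁻¹ • x ∈ Y →
        (φ (((↑(e n) : K)⁻¹ * ↑g * ↑(e n)) • ((↑(e n) : K)⁻¹ • x)) : Set H) =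
          (fun h => c ((↑(e n) : K)⁻¹ * ↑g * ↑(e n)) ((↑(e n) : K)⁻¹ • x) * h) ''
            ((φ ((↑(e n) : K)⁻¹ • x)) : Set H) := by
      intro n
      have := hφeq ⟨(↑(e n) : K)⁻¹ * ↑g * ↑(e n), hg'mem n ↑g g.2⟩
      rw [ae_restrict_iff' hY_meas] at this
      exact pull _ _ this
    rw [ae_restrict_iff' hZmeas]
    filter_upwards [ae_all_iff.2 E1, ae_all_iff.2 E2, ae_all_iff.2 E3] with x h1 h2 h3 hxZ
    have hex : ∃ n, p n x := (hZmem x).1 hxZ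
    set n := Nat.find hex with hn_def
    set k : K := ↑(e n) with hk_def
    have hy : k⁻¹ • x ∈ Y := Nat.find_spec hex
    have hexg : ∃ m, p m ((↑g : K) • x) := ⟨n, (hpinv _ g.2 n x).mpr hy⟩
    have hfind : Nat.find hexg = n := by
      refine le_antisymm (Nat.find_le ((hpinv _ g.2 n x).mpr hy)) ?_
      exact Nat.find_le ((hpinv _ g.2 _ x).mp (Nat.find_spec hexg))
    set g' : K := k⁻¹ * ↑g * k with hg'_def
    set y : X := k⁻¹ • x with hy_def
    have hgyx : k⁻¹ • ((↑g : K) • x) = g' • y := by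
      rw [hy_def, hg'_def, smul_smul, smul_smul]
      congr 1
      group
    have hky : k • y = x := smul_inv_smul k x
    -- unfold ψ at g • x and at x
    have hψg : ψ ((↑g : K) • x) = (φ (g' • y)).image (fun h => c k (g' • y) * h) := by
      simp only [hψ_def, dif_pos hexg, hfind, ← hk_def, hgyx]
    have hψx : ψ x = (φ y).image (fun h => c k y * h) := by
      simp only [hψ_def, dif_pos hex, ← hn_def, ← hk_def, ← hy_def]
    show ((ψ ((↑g : K) • x) : Finset H) : Set H) = (fun h => c (↑g) x * h) '' (ψ x : Set H)
    rw [hψg, hψx, Finset.coe_image, Finset.coe_image, h3 n hy, Set.image_image,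
      Set.image_image]
    refine Set.image_congr fun h _ => ?_
    rw [← mul_assoc, ← h1 n]
    have hkg' : k * g' = ↑g * k := by rw [hg'_def]; group
    rw [hkg', h2 n, ← hy_def, hky, mul_assoc]
end

section
/- Let G < K and H be countable groups, K ↷ (X,μ) a pmp action, c : K × X → H a cocycle, and Y ⊆ X a G-invariant measurable set. If the restriction c|(G × Y) is amenable, then c|(G × Z) is amenable, where Z = ⋃_{k ∈ N_K(G)} kY. -/
open MeasureTheory Filter Topology

/-! ### Auxiliary lemmas -/

lemma lshift_isProbVec {H : Type*} [Group H] (h : H) {p : H → ℝ} (hp : IsProbVec p) :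
    IsProbVec (lshift h p) := by
  refine ⟨fun k => hp.1 _, ?_⟩
  rw [← hp.2]
  exact ((Equiv.mulLeft h).tsum_eq fun k => p (h⁻¹ * k)).symm ▸
    (by simpa using (Equiv.mulLeft h).tsum_eq fun k => p (h⁻¹ * k))

lemma lshift_mul {H : Type*} [Group H] (a b : H) (p : H → ℝ) :
    lshift (a * b) p = lshift a (lshift b p) := by
  funext k
  simp [lshift, mul_assoc]

lemma l1dist_lshift {H : Type*} [Group H] (h : H) (p q : H → ℝ) :
    l1dist (lshift h p) (lshift h q) = l1dist p q := by
  unfold l1dist lshift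
  have := (Equiv.mulLeft h).tsum_eq fun k => |p (h⁻¹ * k) - q (h⁻¹ * k)|
  simp only [Equiv.coe_mulLeft, inv_mul_cancel_left] at this
  exact this.symm

lemma measurable_apply_comp {X ι : Type*} [MeasurableSpace X] [Countable ι]
    [MeasurableSpace ι] [MeasurableSingletonClass ι] {F : X → ι → ℝ}
    (hF : ∀ i, Measurable fun x => F x i) {f : X → ι} (hf : Measurable f) :
    Measurable fun x => F x (f x) := by
  have h2 : Measurable (fun p : X × ι => F p.1 p.2) :=
    measurable_from_prod_countable_left fun i => hF i
  exact h2.comp (measurable_id.prodMk hf)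

/-- Lemma `normalizer` (3). Let `G < K`, `K ↷ (X,μ)` pmp, `c : K × X → H`
a cocycle and `Y ⊆ X` a `G`-invariant measurable set. If `c|(G × Y)` is amenable,
then so is `c|(G × Z)`, where `Z = ⋃_{k ∈ N_K(G)} kY`. -/
theorem amenable_extend_to_normalizer_saturation
    {K H X : Type*} [Group K] [Countable K] [Group H] [Countable H]
    [MeasurableSpace H] [MeasurableSingletonClass H]
    [MeasurableSpace X] (μ : Measure X) [IsProbabilityMeasure μ]
    [MulAction K X] (hsmul_meas : ∀ k : K, Measurable fun x : X => k • x)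
    [SMulInvariantMeasure K X μ]
    (G : Subgroup K)
    (c : K → X → H) (hc_meas : ∀ k : K, Measurable (c k))
    (hc_cocycle : ∀ g₁ g₂ : K, ∀ᵐ x ∂μ, c (g₁ * g₂) x = c g₁ (g₂ • x) * c g₂ x)
    (Y : Set X) (hY_meas : MeasurableSet Y)
    (hY_inv : ∀ g ∈ G, (fun x : X => g • x) ⁻¹' Y = Y)
    (h_triv : AmenableCocycle (μ.restrict Y) (fun (g : G) (x : X) => (g : K) • x)
      (fun (g : G) x => c (g : K) x)) :
    AmenableCocycle
      (μ.restrict (⋃ k ∈ Subgroup.normalizer (G : Set K), (fun x : X => k • x) '' Y))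
      (fun (g : G) (x : X) => (g : K) • x) (fun (g : G) x => c (g : K) x) := by
  classical
  obtain ⟨φ, φmeas, φprob, φtend⟩ := h_triv
  -- measure preservation
  have hmp : ∀ k : K, MeasurePreserving (fun x : X => k • x) μ μ := by
    intro k
    letI : MeasurableSpace K := ⊤
    haveI : MeasurableSMul K X := @MeasurableSMul.mk K X _ _ _ ⟨fun c => hsmul_meas c⟩ fun x => measurable_from_top
    exact measurePreserving_smul k μ
  -- enumerate the normalizer
  obtain ⟨e, he⟩ : ∃ e : ℕ → K, ((Subgroup.normalizer (G : Set K)) : Set K) = Set.range e :=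
    (Set.to_countable _).exists_eq_range ⟨1, (Subgroup.normalizer (G : Set K)).one_mem⟩
  have he_mem : ∀ i, e i ∈ (Subgroup.normalizer (G : Set K)) := by
    intro i
    have : e i ∈ ((Subgroup.normalizer (G : Set K)) : Set K) := he ▸ Set.mem_range_self i
    exact this
  -- the sets A i = (e i) • Y
  set A : ℕ → Set X := fun i => (fun x : X => (e i)⁻¹ • x) ⁻¹' Y with hA_def
  have hA_meas : ∀ i, MeasurableSet (A i) := fun i => hY_meas.preimage (hsmul_meas _)
  have hA_mem : ∀ i x, x ∈ A i ↔ (e i)⁻¹ • x ∈ Y := fun i x => Iff.rfl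
  -- the saturated set equals ⋃ i, A i
  have hZ_eq : (⋃ k ∈ (Subgroup.normalizer (G : Set K)), (fun x : X => k • x) '' Y) = ⋃ i, A i := by
    ext x
    simp only [Set.mem_iUnion, Set.mem_image]
    constructor
    · rintro ⟨k, hk, y, hy, rfl⟩
      obtain ⟨i, rfl⟩ : k ∈ Set.range e := he ▸ hk
      exact ⟨i, by simpa [hA_mem] using hy⟩
    · rintro ⟨i, hi⟩
      exact ⟨e i, he_mem i, (e i)⁻¹ • x, hi, by simp⟩
  -- each A i is pointwise G-invariant
  have hY_iff : ∀ g ∈ G, ∀ x : X, g • x ∈ Y ↔ x ∈ Y := by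
    intro g hg x
    constructor
    · intro h; rw [← hY_inv g hg]; exact h
    · intro h; have := (hY_inv g hg) ▸ h; exact this
  have hconj : ∀ (i : ℕ) (g : G), (e i)⁻¹ * (g : K) * e i ∈ G := by
    intro i g
    have h1 : (e i)⁻¹ ∈ (Subgroup.normalizer (G : Set K)) := (Subgroup.normalizer (G : Set K)).inv_mem (he_mem i)
    have := (Subgroup.mem_normalizer_iff.mp h1 (g : K)).mp g.2
    simpa [mul_assoc] using this
  have hA_inv : ∀ (i : ℕ) (g : G) (x : X), (g : K) • x ∈ A i ↔ x ∈ A i := by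
    intro i g x
    rw [hA_mem, hA_mem]
    have hsm : (e i)⁻¹ • (g : K) • x
        = ((e i)⁻¹ * (g : K) * e i) • ((e i)⁻¹ • x) := by
      rw [smul_smul, smul_smul]
      congr 1
      group
    rw [hsm]
    exact hY_iff _ (hconj i g) _
  -- choice of index
  set P : X → Prop := fun x => ∃ i, x ∈ A i with hP_def
  set idx : X → ℕ := fun x => if h : P x then Nat.find h else 0 with hidx_def
  have hidx_spec : ∀ {x : X} (h : P x), x ∈ A (idx x) := by
    intro x h
    simp only [hidx_def, dif_pos h]
    exact Nat.find_spec h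
  have hidx_inv : ∀ (g : G) (x : X), idx ((g : K) • x) = idx x := by
    intro g x
    by_cases h : P x
    · have h' : P ((g : K) • x) := by
        obtain ⟨i, hi⟩ := h; exact ⟨i, (hA_inv i g x).mpr hi⟩
      simp only [hidx_def, dif_pos h, dif_pos h']
      apply le_antisymm
      · exact Nat.find_le ((hA_inv _ g x).mpr (Nat.find_spec h))
      · exact Nat.find_le ((hA_inv _ g x).mp (Nat.find_spec h'))
    · have h' : ¬ P ((g : K) • x) := by
        intro hc; obtain ⟨i, hi⟩ := hc; exact h ⟨i, (hA_inv i g x).mp hi⟩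
      simp only [hidx_def, dif_neg h, dif_neg h']
  have hidx_meas : Measurable idx := by
    apply measurable_to_countable'
    intro i
    have : idx ⁻¹' {i} = ((A i ∩ ⋂ j ∈ Set.Iio i, (A j)ᶜ)
        ∪ (if i = 0 then (⋃ j, A j)ᶜ else ∅)) := by
      ext x
      simp only [Set.mem_preimage, Set.mem_singleton_iff, Set.mem_union, Set.mem_inter_iff,
        Set.mem_iInter, Set.mem_compl_iff, Set.mem_Iio]
      by_cases h : P x
      · simp only [hidx_def, dif_pos h, Nat.find_eq_iff h]
        constructor
        · rintro ⟨h1, h2⟩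
          exact Or.inl ⟨h1, fun j hj => h2 j hj⟩
        · rintro (⟨h1, h2⟩ | h1)
          · exact ⟨h1, fun j hj => h2 j hj⟩
          · exfalso
            split at h1
            · exact h1 (Set.mem_iUnion.mpr h)
            · exact h1
      · simp only [hidx_def, dif_neg h]
        have hnot : ∀ j, x ∉ A j := fun j hj => h ⟨j, hj⟩
        constructor
        · rintro rfl
          simp only [if_pos rfl]
          exact Or.inr (by simpa using hnot)
        · rintro (⟨h1, _⟩ | h1)
          · exact absurd h1 (hnot i)
          · split at h1
            · omega
            · exact absurd h1 (not_false)
    rw [this]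
    apply MeasurableSet.union
    · exact (hA_meas i).inter (MeasurableSet.biInter (Set.to_countable _)
        fun j _ => (hA_meas j).compl)
    · split
      · exact (MeasurableSet.iUnion hA_meas).compl
      · exact MeasurableSet.empty
  -- the new sequence of probability vectors
  set Ψ : ℕ → ℕ → X → H → ℝ := fun n i x =>
    lshift (c (e i) ((e i)⁻¹ • x)) (φ n ((e i)⁻¹ • x)) with hΨ_def
  set ψ : ℕ → X → H → ℝ := fun n x => Ψ n (idx x) x with hψ_def
  refine ⟨ψ, ?_, ?_, ?_⟩
  · -- measurability
    intro n h
    have : (fun x => ψ n x h) = fun x => Ψ n (idx x) x h := rfl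
    rw [this]
    apply measurable_apply_comp (F := fun x i => Ψ n i x h) _ hidx_meas
    intro i
    have hs : Measurable (fun x : X => (e i)⁻¹ • x) := hsmul_meas _
    have : (fun x => Ψ n i x h)
        = fun x => (fun x a => φ n ((e i)⁻¹ • x) (a⁻¹ * h)) x
            ((fun x => c (e i) ((e i)⁻¹ • x)) x) := rfl
    rw [this]
    have hcm : Measurable fun x : X => c (e i) ((e i)⁻¹ • x) := (hc_meas _).comp hs
    have hf : Measurable fun x : X => (c (e i) ((e i)⁻¹ • x))⁻¹ * h :=
      (measurable_of_countable (fun b : H => b⁻¹ * h)).comp hcm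
    exact measurable_apply_comp (F := fun x a => φ n ((e i)⁻¹ • x) a)
      (f := fun x => (c (e i) ((e i)⁻¹ • x))⁻¹ * h)
      (fun a => (φmeas n a).comp hs) hf
  · -- probability vectors
    intro n x
    exact lshift_isProbVec _ (φprob n _)
  · -- convergence
    intro g
    -- a.e. facts, for each index i
    have main : ∀ᵐ x ∂μ, ∀ i : ℕ,
        (c ((g : K) * e i) ((e i)⁻¹ • x) = c (g : K) (e i • (e i)⁻¹ • x) * c (e i) ((e i)⁻¹ • x))
        ∧ (c (e i * ((e i)⁻¹ * (g : K) * e i)) ((e i)⁻¹ • x)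
            = c (e i) (((e i)⁻¹ * (g : K) * e i) • (e i)⁻¹ • x)
              * c ((e i)⁻¹ * (g : K) * e i) ((e i)⁻¹ • x))
        ∧ ((e i)⁻¹ • x ∈ Y →
            Tendsto (fun n => l1dist (φ n ((((e i)⁻¹ * (g : K) * e i)) • ((e i)⁻¹ • x)))
              (lshift (c ((e i)⁻¹ * (g : K) * e i) ((e i)⁻¹ • x)) (φ n ((e i)⁻¹ • x))))
              atTop (𝓝 0)) := by
      rw [ae_all_iff]
      intro i
      have hqmp := (hmp ((e i)⁻¹)).quasiMeasurePreserving
      have h1 : ∀ᵐ x ∂μ, c ((g : K) * e i) ((e i)⁻¹ • x)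
          = c (g : K) (e i • (e i)⁻¹ • x) * c (e i) ((e i)⁻¹ • x) :=
        hqmp.ae (hc_cocycle (g : K) (e i))
      have h2 : ∀ᵐ x ∂μ, c (e i * ((e i)⁻¹ * (g : K) * e i)) ((e i)⁻¹ • x)
          = c (e i) (((e i)⁻¹ * (g : K) * e i) • (e i)⁻¹ • x)
            * c ((e i)⁻¹ * (g : K) * e i) ((e i)⁻¹ • x) :=
        hqmp.ae (hc_cocycle (e i) ((e i)⁻¹ * (g : K) * e i))
      have h3 : ∀ᵐ x ∂μ, (e i)⁻¹ • x ∈ Y →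
          Tendsto (fun n => l1dist (φ n ((((e i)⁻¹ * (g : K) * e i)) • ((e i)⁻¹ • x)))
            (lshift (c ((e i)⁻¹ * (g : K) * e i) ((e i)⁻¹ • x)) (φ n ((e i)⁻¹ • x))))
            atTop (𝓝 0) := by
        have := φtend ⟨(e i)⁻¹ * (g : K) * e i, hconj i g⟩
        rw [ae_restrict_iff' hY_meas] at this
        exact hqmp.ae this
      filter_upwards [h1, h2, h3] with x hx1 hx2 hx3
      exact ⟨hx1, hx2, hx3⟩
    have main' : ∀ᵐ x ∂(μ.restrict (⋃ k ∈ (Subgroup.normalizer (G : Set K)), (fun x : X => k • x) '' Y)), ∀ i : ℕ,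
        (c ((g : K) * e i) ((e i)⁻¹ • x) = c (g : K) (e i • (e i)⁻¹ • x) * c (e i) ((e i)⁻¹ • x))
        ∧ (c (e i * ((e i)⁻¹ * (g : K) * e i)) ((e i)⁻¹ • x)
            = c (e i) (((e i)⁻¹ * (g : K) * e i) • (e i)⁻¹ • x)
              * c ((e i)⁻¹ * (g : K) * e i) ((e i)⁻¹ • x))
        ∧ ((e i)⁻¹ • x ∈ Y →
            Tendsto (fun n => l1dist (φ n ((((e i)⁻¹ * (g : K) * e i)) • ((e i)⁻¹ • x)))
              (lshift (c ((e i)⁻¹ * (g : K) * e i) ((e i)⁻¹ • x)) (φ n ((e i)⁻¹ • x))))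
              atTop (𝓝 0)) :=
      ae_mono Measure.restrict_le_self main
    have hmemZ : ∀ᵐ x ∂(μ.restrict (⋃ k ∈ (Subgroup.normalizer (G : Set K)), (fun x : X => k • x) '' Y)),
        x ∈ (⋃ k ∈ (Subgroup.normalizer (G : Set K)), (fun x : X => k • x) '' Y) := by
      apply ae_restrict_mem
      rw [hZ_eq]
      exact MeasurableSet.iUnion hA_meas
    filter_upwards [main', hmemZ] with x hx hxZ
    -- now the pointwise computation
    have hPx : P x := by
      rw [hZ_eq, Set.mem_iUnion] at hxZ
      exact hxZ
    set i := idx x with hi_def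
    set k := e i with hk_def
    set y : X := k⁻¹ • x with hy_def
    have hyY : y ∈ Y := hidx_spec hPx
    set g' : K := k⁻¹ * (g : K) * k with hg'_def
    obtain ⟨hx1, hx2, hx3⟩ := hx i
    -- idx (g • x) = idx x
    have hidxg : idx ((g : K) • x) = i := hidx_inv g x
    -- key smul identity
    have hsm : k⁻¹ • (g : K) • x = g' • y := by
      rw [hy_def, hg'_def, smul_smul, smul_smul]
      congr 1
      group
    have hky : k • y = x := by rw [hy_def]; simp
    -- rewrite both sides
    have key : ∀ n, l1dist (ψ n ((g : K) • x)) (lshift (c (g : K) x) (ψ n x))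
        = l1dist (φ n (g' • y)) (lshift (c g' y) (φ n y)) := by
      intro n
      have e1 : ψ n ((g : K) • x) = lshift (c k (g' • y)) (φ n (g' • y)) := by
        simp only [hψ_def, hΨ_def, hidxg]
        rw [show (e i) = k from rfl, hsm]
      have e2 : lshift (c (g : K) x) (ψ n x)
          = lshift (c k (g' • y)) (lshift (c g' y) (φ n y)) := by
        simp only [hψ_def, hΨ_def, ← hi_def]
        rw [show (e i) = k from rfl]
        rw [← hy_def, ← lshift_mul, ← lshift_mul]
        congr 1
        have hgk : (g : K) * k = k * g' := by rw [hg'_def]; group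
        have hx1' : c ((g : K) * k) y = c (g : K) x * c k y := by
          have := hx1
          rw [← hk_def, ← hy_def, hky] at this
          exact this
        have hx2' : c (k * g') y = c k (g' • y) * c g' y := by
          have := hx2
          rw [← hk_def, ← hy_def, ← hg'_def] at this
          exact this
        rw [← hx1', hgk, hx2']
      rw [e1, e2, l1dist_lshift]
    simp only [key]
    exact hx3 hyY
end

section
/- Let G, H be countable groups with normal subgroups M ⊴ G, N ⊴ H, and assume Ḡ = G/M is ICC. Let (Ω,m) be an ME-coupling of G and H with fundamental domain Y₀ for the G-action, associated ME-cocycle c : H × Y₀ → G, and let c̄ be the composition of c with the projection G → Ḡ. If the restriction c̄|(N × Y₀) is essentially trivial, then there exists a fundamental domain Y ⊆ Ω for the G-action such that NY ⊆ MY. -/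
open MeasureTheory Filter Topology

/-- `(Ω, m)` together with commuting measure-preserving actions `σ` of `G` and `τ` of `H`,
each admitting a finite-measure fundamental domain, is a measure equivalence coupling. -/
structure MECoupling (G H : Type*) {Ω : Type*} [Group G] [Group H]
    [MeasurableSpace Ω] (m : MeasureTheory.Measure Ω)
    (σ : G → Ω → Ω) (τ : H → Ω → Ω) : Prop where
  σ_one : σ 1 = id
  σ_mul : ∀ g₁ g₂, σ (g₁ * g₂) = σ g₁ ∘ σ g₂
  τ_one : τ 1 = id
  τ_mul : ∀ h₁ h₂, τ (h₁ * h₂) = τ h₁ ∘ τ h₂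
  comm : ∀ g h, σ g ∘ τ h = τ h ∘ σ g
  σ_mp : ∀ g, MeasureTheory.MeasurePreserving (σ g) m m
  τ_mp : ∀ h, MeasureTheory.MeasurePreserving (τ h) m m
  exists_dom_G : ∃ Y : Set Ω, MeasurableSet Y ∧ m Y < ⊤ ∧ ∀ᵐ ω ∂m, ∃! g : G, σ g ω ∈ Y
  exists_dom_H : ∃ X : Set Ω, MeasurableSet X ∧ m X < ⊤ ∧ ∀ᵐ ω ∂m, ∃! h : H, τ h ω ∈ X

/-- Two countable groups are measure equivalent if they admit an ME coupling. -/
def MeasureEquivalent (G H : Type*) [Group G] [Group H] : Prop :=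
  ∃ (Ω : Type) (_ : MeasurableSpace Ω) (m : MeasureTheory.Measure Ω)
    (σ : G → Ω → Ω) (τ : H → Ω → Ω), MECoupling G H m σ τ

/-- A group is amenable iff it satisfies Reiter's property: there are `ℓ¹` probability
vectors that are asymptotically invariant under left translation. -/
def IsAmenableGroup (G : Type*) [Group G] : Prop :=
  ∃ φ : ℕ → G → ℝ, (∀ n, IsProbVec (φ n)) ∧
    ∀ g : G, Filter.Tendsto (fun n => l1dist (lshift g (φ n)) (φ n)) Filter.atTop (nhds 0)
/-- A group is ICC if every nontrivial conjugacy class is infinite. -/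
def IsICC (G : Type*) [Group G] : Prop :=
  ∀ g : G, g ≠ 1 → {h : G | ∃ k : G, k * g * k⁻¹ = h}.Infinite
set_option linter.unusedSectionVars false
set_option maxHeartbeats 1000000

open scoped ENNReal NNReal

namespace MEICCProof

section FD

variable {Ω K : Type*} [MeasurableSpace Ω] [Countable K] [Group K]
  {m : Measure Ω} {ρ : K → Ω → Ω}

/-- the good set where the fundamental-domain property holds, measurably. -/
def fdGood (ρ : K → Ω → Ω) (X : Set Ω) : Set Ω := {ω | ∃! k : K, ρ k ω ∈ X}

lemma fdGood_measurable (hmeas : ∀ k, Measurable (ρ k)) {X : Set Ω} (hX : MeasurableSet X) :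
    MeasurableSet (fdGood ρ X) := by
  have : fdGood ρ X = {ω | ∃ k, ρ k ω ∈ X} ∩
      ⋂ (k₁ : K) (k₂ : K), {ω | ρ k₁ ω ∈ X → ρ k₂ ω ∈ X → k₁ = k₂} := by
    ext ω
    constructor
    · rintro ⟨k, hk, hu⟩
      refine ⟨⟨k, hk⟩, ?_⟩
      simp only [Set.mem_iInter, Set.mem_setOf_eq]
      intro k₁ k₂ h1 h2
      rw [hu k₁ h1, hu k₂ h2]
    · rintro ⟨⟨k, hk⟩, hu⟩
      simp only [Set.mem_iInter, Set.mem_setOf_eq] at hu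
      exact ⟨k, hk, fun k' hk' => hu k' k hk' hk⟩
  rw [this]
  apply MeasurableSet.inter
  · rw [Set.setOf_exists]
    exact MeasurableSet.iUnion fun k => (hmeas k) hX
  · refine MeasurableSet.iInter fun k₁ => MeasurableSet.iInter fun k₂ => ?_
    by_cases h : k₁ = k₂
    · simp [h]
    · have : {ω | ρ k₁ ω ∈ X → ρ k₂ ω ∈ X → k₁ = k₂}
          = ((ρ k₁) ⁻¹' X ∩ (ρ k₂) ⁻¹' X)ᶜ := by
        ext ω; simp only [Set.mem_setOf_eq, Set.mem_compl_iff, Set.mem_inter_iff,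
          Set.mem_preimage]
        tauto
      rw [this]
      exact (((hmeas k₁) hX).inter ((hmeas k₂) hX)).compl

/-- partition of any measurable set by the translates of a fundamental domain. -/
lemma fd_partition (hmeas : ∀ k, Measurable (ρ k))
    {X : Set Ω} (hX : MeasurableSet X) (hfund : ∀ᵐ ω ∂m, ∃! k : K, ρ k ω ∈ X)
    {A : Set Ω} (hA : MeasurableSet A) :
    m A = ∑' k : K, m (A ∩ ρ k ⁻¹' X) := by
  have hGm : MeasurableSet (fdGood ρ X) := fdGood_measurable hmeas hX
  have h1 : m A = m (A ∩ fdGood ρ X) := by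
    refine (measure_congr (eventuallyEq_set.2 ?_)).symm
    filter_upwards [hfund] with ω hω
    simp only [Set.mem_inter_iff, fdGood, Set.mem_setOf_eq]
    tauto
  have h2 : A ∩ fdGood ρ X = ⋃ k : K, (A ∩ fdGood ρ X) ∩ ρ k ⁻¹' X := by
    ext ω
    simp only [Set.mem_iUnion, Set.mem_inter_iff, Set.mem_preimage]
    constructor
    · rintro ⟨hA', hG⟩
      obtain ⟨k, hk, -⟩ := id hG
      exact ⟨k, ⟨⟨hA', hG⟩, hk⟩⟩
    · rintro ⟨k, ⟨⟨hA', hG⟩, -⟩⟩; exact ⟨hA', hG⟩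
  have hdisj : Pairwise (Function.onFun Disjoint
      (fun k : K => (A ∩ fdGood ρ X) ∩ ρ k ⁻¹' X)) := by
    intro k₁ k₂ hne
    refine Set.disjoint_left.2 ?_
    rintro ω ⟨⟨-, hG⟩, h1'⟩ ⟨-, h2'⟩
    exact hne (hG.unique h1' h2')
  have h3 : m (A ∩ fdGood ρ X) = ∑' k : K, m ((A ∩ fdGood ρ X) ∩ ρ k ⁻¹' X) := by
    conv_lhs => rw [h2]
    exact measure_iUnion hdisj fun k => (hA.inter hGm).inter ((hmeas k) hX)
  have h4 : ∀ k : K, m ((A ∩ fdGood ρ X) ∩ ρ k ⁻¹' X) = m (A ∩ ρ k ⁻¹' X) := by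
    intro k
    refine measure_congr (eventuallyEq_set.2 ?_)
    filter_upwards [hfund] with ω hω
    simp only [Set.mem_inter_iff, fdGood, Set.mem_setOf_eq]
    tauto
  rw [h1, h3]
  exact tsum_congr h4

variable (hone : ρ 1 = id) (hmul : ∀ k₁ k₂, ρ (k₁ * k₂) = ρ k₁ ∘ ρ k₂)
  (hmp : ∀ k, MeasurePreserving (ρ k) m m)

include hone hmul in
lemma rho_inv_cancel (k : K) (ω : Ω) : ρ k⁻¹ (ρ k ω) = ω := by
  have : ρ k⁻¹ ∘ ρ k = id := by rw [← hmul, inv_mul_cancel, hone]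
  exact congrFun this ω

include hone hmul hmp in
/-- if `W ∩ X` is null for an a.e.-invariant `W` and fundamental domain `X`, then `W` is null. -/
lemma fd_null_of_null_inter (hmeas : ∀ k, Measurable (ρ k))
    {X : Set Ω} (hX : MeasurableSet X) (hfund : ∀ᵐ ω ∂m, ∃! k : K, ρ k ω ∈ X)
    {W : Set Ω} (hW : MeasurableSet W)
    (hWi : ∀ k : K, ∀ᵐ ω ∂m, (ω ∈ W ↔ ρ k ω ∈ W))
    (h0 : m (W ∩ X) = 0) : m W = 0 := by
  rw [fd_partition hmeas hX hfund hW]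
  refine ENNReal.tsum_eq_zero.2 fun k => ?_
  have e1 : m (W ∩ ρ k ⁻¹' X) = m (ρ k ⁻¹' W ∩ ρ k ⁻¹' X) := by
    refine measure_congr (eventuallyEq_set.2 ?_)
    filter_upwards [hWi k] with ω hω
    simp only [Set.mem_inter_iff, Set.mem_preimage]
    tauto
  rw [e1, ← Set.preimage_inter,
    (hmp k).measure_preimage (hW.inter hX).nullMeasurableSet, h0]

include hone hmul hmp in
/-- exchange lemma: the mass of an a.e.-invariant set in two fundamental domains agrees. -/
lemma fd_exchange (hmeas : ∀ k, Measurable (ρ k))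
    {X₁ X₂ : Set Ω} (hX₁ : MeasurableSet X₁) (hX₂ : MeasurableSet X₂)
    (hfund₁ : ∀ᵐ ω ∂m, ∃! k : K, ρ k ω ∈ X₁) (hfund₂ : ∀ᵐ ω ∂m, ∃! k : K, ρ k ω ∈ X₂)
    {W : Set Ω} (hW : MeasurableSet W)
    (hWi : ∀ k : K, ∀ᵐ ω ∂m, (ω ∈ W ↔ ρ k ω ∈ W)) :
    m (W ∩ X₁) = m (W ∩ X₂) := by
  have key : ∀ k : K, m ((W ∩ X₁) ∩ ρ k ⁻¹' X₂) = m ((W ∩ X₂) ∩ ρ k⁻¹ ⁻¹' X₁) := by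
    intro k
    have e1 : m ((W ∩ X₁) ∩ ρ k ⁻¹' X₂) = m ((ρ k ⁻¹' W ∩ X₁) ∩ ρ k ⁻¹' X₂) := by
      refine measure_congr (eventuallyEq_set.2 ?_)
      filter_upwards [hWi k] with ω hω
      simp only [Set.mem_inter_iff, Set.mem_preimage]
      tauto
    have e2 : (ρ k ⁻¹' W ∩ X₁) ∩ ρ k ⁻¹' X₂ = ρ k ⁻¹' ((W ∩ X₂) ∩ ρ k⁻¹ ⁻¹' X₁) := by
      ext ω
      simp only [Set.mem_inter_iff, Set.mem_preimage, rho_inv_cancel hone hmul]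
      tauto
    rw [e1, e2, (hmp k).measure_preimage
      ((hW.inter hX₂).inter ((hmeas k⁻¹) hX₁)).nullMeasurableSet]
  calc m (W ∩ X₁) = ∑' k : K, m ((W ∩ X₁) ∩ ρ k ⁻¹' X₂) :=
        fd_partition hmeas hX₂ hfund₂ (hW.inter hX₁)
    _ = ∑' k : K, m ((W ∩ X₂) ∩ ρ k⁻¹ ⁻¹' X₁) := tsum_congr key
    _ = ∑' k : K, m ((W ∩ X₂) ∩ ρ k ⁻¹' X₁) :=
          (Equiv.inv K).tsum_eq (fun k => m ((W ∩ X₂) ∩ ρ k ⁻¹' X₁))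
    _ = m (W ∩ X₂) := (fd_partition hmeas hX₁ hfund₁ (hW.inter hX₂)).symm

end FD

section FinsetAlg

variable {Γ : Type*} [Group Γ]

noncomputable def lmul (x : Γ) (F : Finset Γ) : Finset Γ :=
  letI := Classical.decEq Γ
  F.image (fun y => x * y)

noncomputable def rmul (F : Finset Γ) (δ : Γ) : Finset Γ :=
  letI := Classical.decEq Γ
  F.image (fun y => y * δ)

lemma mem_lmul {x y : Γ} {F : Finset Γ} : y ∈ lmul x F ↔ x⁻¹ * y ∈ F := by
  classical
  simp only [lmul, Finset.mem_image]
  constructor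
  · rintro ⟨z, hz, rfl⟩; simpa using hz
  · intro h; exact ⟨x⁻¹ * y, h, by group⟩

lemma mem_rmul {δ y : Γ} {F : Finset Γ} : y ∈ rmul F δ ↔ y * δ⁻¹ ∈ F := by
  classical
  simp only [rmul, Finset.mem_image]
  constructor
  · rintro ⟨z, hz, rfl⟩; simpa using hz
  · intro h; exact ⟨y * δ⁻¹, h, by group⟩

lemma card_lmul (x : Γ) (F : Finset Γ) : (lmul x F).card = F.card := by
  classical
  exact Finset.card_image_of_injective F (mul_right_injective x)

lemma card_rmul (F : Finset Γ) (δ : Γ) : (rmul F δ).card = F.card := by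
  classical
  exact Finset.card_image_of_injective F (mul_left_injective δ)

lemma lmul_one (F : Finset Γ) : lmul 1 F = F := by
  ext y; simp [mem_lmul]

lemma lmul_lmul (x₁ x₂ : Γ) (F : Finset Γ) : lmul x₁ (lmul x₂ F) = lmul (x₁ * x₂) F := by
  ext y; simp [mem_lmul, mul_assoc]

lemma lmul_rmul (x δ : Γ) (F : Finset Γ) : lmul x (rmul F δ) = rmul (lmul x F) δ := by
  ext y; simp [mem_lmul, mem_rmul, mul_assoc]

lemma lmul_nonempty {x : Γ} {F : Finset Γ} (h : F.Nonempty) : (lmul x F).Nonempty := by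
  obtain ⟨y, hy⟩ := h
  exact ⟨x * y, mem_lmul.2 (by simpa using hy)⟩

lemma rmul_nonempty {δ : Γ} {F : Finset Γ} (h : F.Nonempty) : (rmul F δ).Nonempty := by
  obtain ⟨y, hy⟩ := h
  exact ⟨y * δ, mem_rmul.2 (by simpa using hy)⟩

lemma lmul_injective (x : Γ) {F F' : Finset Γ} (h : lmul x F = lmul x F') : F = F' := by
  have := congrArg (lmul x⁻¹) h
  simpa [lmul_lmul, lmul_one] using this

lemma rmul_one (F : Finset Γ) : rmul F 1 = F := by
  ext y; simp [mem_rmul]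

lemma rmul_rmul (F : Finset Γ) (δ₁ δ₂ : Γ) : rmul (rmul F δ₁) δ₂ = rmul F (δ₁ * δ₂) := by
  ext y; simp [mem_rmul, mul_assoc]

lemma rmul_injective (δ : Γ) {F F' : Finset Γ} (h : rmul F δ = rmul F' δ) : F = F' := by
  have := congrArg (fun S => rmul S δ⁻¹) h
  simpa [rmul_rmul, rmul_one] using this

/-- the left stabilizer of a finite set, as a finite set. -/
noncomputable def Tstab (F : Finset Γ) : Finset Γ :=
  letI := Classical.decEq Γ
  ((F ×ˢ F).image fun p => p.1 * p.2⁻¹).filter fun v => lmul v F = F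

lemma mem_Tstab {v : Γ} {F : Finset Γ} (hF : F.Nonempty) :
    v ∈ Tstab F ↔ lmul v F = F := by
  classical
  simp only [Tstab, Finset.mem_filter, Finset.mem_image, Finset.mem_product]
  constructor
  · rintro ⟨-, h⟩; exact h
  · intro h
    obtain ⟨u, hu⟩ := hF
    have hvu : v * u ∈ F := by rw [← h]; exact mem_lmul.2 (by simpa using hu)
    exact ⟨⟨(v * u, u), ⟨hvu, hu⟩, by group⟩, h⟩

lemma one_mem_Tstab {F : Finset Γ} (hF : F.Nonempty) : (1 : Γ) ∈ Tstab F :=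
  (mem_Tstab hF).2 (lmul_one F)

lemma card_Tstab_le (F : Finset Γ) : (Tstab F).card ≤ F.card * F.card := by
  classical
  calc (Tstab F).card ≤ ((F ×ˢ F).image fun p : Γ × Γ => p.1 * p.2⁻¹).card :=
        Finset.card_filter_le _ _
    _ ≤ (F ×ˢ F).card := Finset.card_image_le
    _ = F.card * F.card := Finset.card_product F F

lemma card_le_card_Tstab {F : Finset Γ} (hF : F.Nonempty)
    (P : ∀ δ : Γ, (∃ y, y ∈ F ∧ y ∈ rmul F δ) → F = rmul F δ) :
    F.card ≤ (Tstab F).card := by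
  classical
  obtain ⟨u, hu⟩ := hF
  have hstep : ∀ w ∈ F, ∀ x ∈ F, x * (u⁻¹ * w) ∈ F := by
    intro w hw x hx
    have hne : ∃ y, y ∈ F ∧ y ∈ rmul F (u⁻¹ * w) := by
      refine ⟨w, hw, mem_rmul.2 ?_⟩
      have : w * (u⁻¹ * w)⁻¹ = u := by group
      rw [this]; exact hu
    have hF' := P (u⁻¹ * w) hne
    rw [hF', mem_rmul]
    have : x * (u⁻¹ * w) * (u⁻¹ * w)⁻¹ = x := by group
    rw [this]; exact hx
  have hmem : ∀ x ∈ F, x * u⁻¹ ∈ Tstab F := by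
    intro x hx
    refine (mem_Tstab ⟨u, hu⟩).2 ?_
    have hsub : lmul (x * u⁻¹) F ⊆ F := by
      intro z hz
      rw [mem_lmul] at hz
      have h2 := hstep _ hz x hx
      have : x * (u⁻¹ * ((x * u⁻¹)⁻¹ * z)) = z := by group
      rwa [this] at h2
    exact Finset.eq_of_subset_of_card_le hsub (by rw [card_lmul])
  have hinj : Set.InjOn (fun x => x * u⁻¹) F := fun a _ b _ h => mul_right_cancel h
  calc F.card ≤ (Tstab F).card := Finset.card_le_card_of_injOn _ hmem hinj

lemma mem_Tstab_lmul {x v : Γ} {F : Finset Γ} (hF : F.Nonempty) :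
    v ∈ Tstab (lmul x F) ↔ x⁻¹ * v * x ∈ Tstab F := by
  rw [mem_Tstab (lmul_nonempty hF), mem_Tstab hF]
  constructor
  · intro h
    have h1 : lmul (v * x) F = lmul x F := by rw [← lmul_lmul]; exact h
    have h2 := congrArg (lmul x⁻¹) h1
    rw [lmul_lmul, lmul_lmul, inv_mul_cancel, lmul_one] at h2
    rw [show x⁻¹ * v * x = x⁻¹ * (v * x) by group]
    exact h2
  · intro hw
    rw [lmul_lmul]
    have : v * x = x * (x⁻¹ * v * x) := by group
    rw [this, ← lmul_lmul, hw]

lemma Tstab_rmul {δ : Γ} {F : Finset Γ} (hF : F.Nonempty) :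
    Tstab (rmul F δ) = Tstab F := by
  ext v
  rw [mem_Tstab (rmul_nonempty hF), mem_Tstab hF]
  constructor
  · intro h
    rw [lmul_rmul] at h
    exact rmul_injective δ h
  · intro h
    rw [lmul_rmul, h]

end FinsetAlg

section FinsetAlg2
variable {Γ : Type*} [Group Γ]

/-- intersection of finsets without DecidableEq -/
noncomputable def interF (F₁ F₂ : Finset Γ) : Finset Γ :=
  letI := Classical.decEq Γ
  F₁.filter (fun y => y ∈ F₂)

lemma mem_interF {y : Γ} {F₁ F₂ : Finset Γ} : y ∈ interF F₁ F₂ ↔ y ∈ F₁ ∧ y ∈ F₂ := by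
  classical
  simp [interF]

lemma interF_lmul (x : Γ) (F₁ F₂ : Finset Γ) :
    interF (lmul x F₁) (lmul x F₂) = lmul x (interF F₁ F₂) := by
  ext y; simp [mem_interF, mem_lmul]

lemma interF_subset_left (F₁ F₂ : Finset Γ) : interF F₁ F₂ ⊆ F₁ :=
  fun y hy => (mem_interF.1 hy).1

lemma lmul_nonempty_iff {x : Γ} {F : Finset Γ} : (lmul x F).Nonempty ↔ F.Nonempty := by
  constructor
  · rintro ⟨y, hy⟩; exact ⟨x⁻¹ * y, mem_lmul.1 hy⟩
  · rintro ⟨y, hy⟩; exact ⟨x * y, mem_lmul.2 (by simpa using hy)⟩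

end FinsetAlg2

section Core

variable {G H Ω : Type*} [Group G] [Countable G] [Group H] [Countable H]
  [MeasurableSpace Ω] {M : Subgroup G} [M.Normal] {N : Subgroup H}

/-- equivariant finite-set-valued maps on the coupling -/
structure GoodMap (m : Measure Ω) (σ : G → Ω → Ω) (τ : H → Ω → Ω)
    (M : Subgroup G) [M.Normal] (N : Subgroup H) where
  Ψ : Ω → Finset (G ⧸ M)
  meas : ∀ F : Finset (G ⧸ M), MeasurableSet {ω | Ψ ω = F}
  ne : ∀ ω, (Ψ ω).Nonempty
  equiv : ∀ g : G, ∀ᵐ ω ∂m, Ψ (σ g ω) = lmul (QuotientGroup.mk g) (Ψ ω)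
  inv : ∀ n : N, ∀ᵐ ω ∂m, Ψ (τ (n : H) ω) = Ψ ω

variable {m : Measure Ω} {σ : G → Ω → Ω} {τ : H → Ω → Ω}

lemma ae_comp {f : Ω → Ω} (hf : MeasurePreserving f m m) {p : Ω → Prop}
    (h : ∀ᵐ ω ∂m, p ω) : ∀ᵐ ω ∂m, p (f ω) := hf.quasiMeasurePreserving.ae h

variable (hME : MECoupling G H m σ τ)

include hME

lemma tau_inv_cancel (h : H) (ω : Ω) : τ h⁻¹ (τ h ω) = ω := by
  have : τ h⁻¹ ∘ τ h = id := by rw [← hME.τ_mul, inv_mul_cancel, hME.τ_one]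
  exact congrFun this ω

lemma sigma_inv_cancel (g : G) (ω : Ω) : σ g⁻¹ (σ g ω) = ω := by
  have : σ g⁻¹ ∘ σ g = id := by rw [← hME.σ_mul, inv_mul_cancel, hME.σ_one]
  exact congrFun this ω

lemma sigma_tau_comm (g : G) (h : H) (ω : Ω) : σ g (τ h ω) = τ h (σ g ω) :=
  congrFun (hME.comm g h) ω

/-- composing a good map with a `τ`-translation yields a good map; normality of `N` is used. -/
noncomputable def GoodMap.compTau [N.Normal] (P : GoodMap m σ τ M N) (h : H) :
    GoodMap m σ τ M N where
  Ψ := fun ω => P.Ψ (τ h ω)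
  meas := fun F => (hME.τ_mp h).measurable (P.meas F)
  ne := fun ω => P.ne _
  equiv := by
    intro g
    filter_upwards [ae_comp (hME.τ_mp h) (P.equiv g)] with ω hω
    rw [← sigma_tau_comm hME g h ω]
    exact hω
  inv := by
    intro n
    have hn' : (h * (n : H) * h⁻¹) ∈ N := Subgroup.Normal.conj_mem ‹N.Normal› _ n.2 h
    filter_upwards [ae_comp (hME.τ_mp h) (P.inv ⟨h * (n : H) * h⁻¹, hn'⟩)] with ω hω
    have e1 : τ h (τ (n : H) ω) = τ ((h * (n : H) * h⁻¹) : H) (τ h ω) := by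
      rw [← Function.comp_apply (f := τ h) (g := τ (n:H)), ← hME.τ_mul]
      rw [← Function.comp_apply (f := τ _) (g := τ h), ← hME.τ_mul]
      congr 1
      group
    rw [e1]
    exact hω

/-- combining two good maps with a pointwise translation-equivariant operation. -/
noncomputable def GoodMap.combine (P Q : GoodMap m σ τ M N)
    (val : Finset (G ⧸ M) → Finset (G ⧸ M) → Finset (G ⧸ M))
    (hval_ne : ∀ F₁ F₂ : Finset (G ⧸ M), F₁.Nonempty → F₂.Nonempty → (val F₁ F₂).Nonempty)
    (hval_eq : ∀ (x : G ⧸ M) F₁ F₂, val (lmul x F₁) (lmul x F₂) = lmul x (val F₁ F₂)) :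
    GoodMap m σ τ M N where
  Ψ := fun ω => val (P.Ψ ω) (Q.Ψ ω)
  meas := by
    intro F
    have : {ω | val (P.Ψ ω) (Q.Ψ ω) = F} =
        ⋃ (p : Finset (G ⧸ M) × Finset (G ⧸ M)) (_ : val p.1 p.2 = F),
          ({ω | P.Ψ ω = p.1} ∩ {ω | Q.Ψ ω = p.2}) := by
      ext ω
      simp only [Set.mem_setOf_eq, Set.mem_iUnion, Set.mem_inter_iff]
      constructor
      · intro hv; exact ⟨(P.Ψ ω, Q.Ψ ω), hv, rfl, rfl⟩
      · rintro ⟨⟨F₁, F₂⟩, hv, h1, h2⟩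
        simp only [Set.mem_setOf_eq] at h1 h2
        rw [h1, h2]; exact hv
    rw [this]
    haveI : Countable (G ⧸ M) := Quotient.countable
    exact MeasurableSet.iUnion fun p => MeasurableSet.iUnion fun _ =>
      (P.meas p.1).inter (Q.meas p.2)
  ne := fun ω => hval_ne _ _ (P.ne ω) (Q.ne ω)
  equiv := by
    intro g
    filter_upwards [P.equiv g, Q.equiv g] with ω h1 h2
    rw [h1, h2, hval_eq]
  inv := by
    intro n
    filter_upwards [P.inv n, Q.inv n] with ω h1 h2
    rw [h1, h2]

end Core


section FCard

noncomputable def fcard (j : ℕ) : ℝ≥0∞ := ∑ i ∈ Finset.range j, (2⁻¹ : ℝ≥0∞) ^ (i + 1)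

lemma fcard_succ (j : ℕ) : fcard (j + 1) = fcard j + (2⁻¹ : ℝ≥0∞) ^ (j + 1) :=
  Finset.sum_range_succ _ j

lemma fcard_mono : Monotone fcard := by
  intro i j hij
  exact Finset.sum_le_sum_of_subset (Finset.range_subset_range.2 hij)

lemma fcard_add_pow (j : ℕ) : fcard j + (2⁻¹ : ℝ≥0∞) ^ j = 1 := by
  induction j with
  | zero => simp [fcard]
  | succ j ih =>
    rw [fcard_succ, add_assoc]
    have : (2⁻¹ : ℝ≥0∞) ^ (j + 1) + (2⁻¹ : ℝ≥0∞) ^ (j + 1) = (2⁻¹ : ℝ≥0∞) ^ j := by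
      rw [pow_succ]
      rw [← mul_add, ENNReal.inv_two_add_inv_two, mul_one]
    rw [this, ih]

lemma fcard_le_one (j : ℕ) : fcard j ≤ 1 := by
  conv_rhs => rw [← fcard_add_pow j]
  exact le_self_add

lemma fcard_lt_top (j : ℕ) : fcard j < ⊤ := lt_of_le_of_lt (fcard_le_one j) (by simp)

lemma fcard_gap {i j : ℕ} (hij : i < j) : fcard i + (2⁻¹ : ℝ≥0∞) ^ j ≤ fcard j := by
  have h1 : fcard (i + 1) ≤ fcard j := fcard_mono hij
  have h2 : (2⁻¹ : ℝ≥0∞) ^ j ≤ (2⁻¹ : ℝ≥0∞) ^ (i + 1) :=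
    pow_le_pow_of_le_one bot_le (by simp [ENNReal.inv_le_one]) hij
  calc fcard i + (2⁻¹ : ℝ≥0∞) ^ j ≤ fcard i + (2⁻¹ : ℝ≥0∞) ^ (i + 1) := by
        exact add_le_add le_rfl h2
    _ = fcard (i + 1) := (fcard_succ i).symm
    _ ≤ fcard j := h1

end FCard

section Minimal

variable {G H Ω : Type*} [Group G] [Countable G] [Group H] [Countable H]
  [MeasurableSpace Ω] {M : Subgroup G} [M.Normal] {N : Subgroup H}
  {m : Measure Ω} {σ : G → Ω → Ω} {τ : H → Ω → Ω}

lemma GoodMap.measurable_comp (P : GoodMap m σ τ M N) {β : Type*} [MeasurableSpace β]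
    (f : Finset (G ⧸ M) → β) : Measurable fun ω => f (P.Ψ ω) := by
  haveI : Countable (G ⧸ M) := Quotient.countable
  intro s hs
  have : (fun ω => f (P.Ψ ω)) ⁻¹' s = ⋃ (F : Finset (G ⧸ M)) (_ : f F ∈ s), {ω | P.Ψ ω = F} := by
    ext ω
    simp only [Set.mem_preimage, Set.mem_iUnion, Set.mem_setOf_eq]
    constructor
    · intro h; exact ⟨P.Ψ ω, h, rfl⟩
    · rintro ⟨F, hF, hω⟩; rw [hω]; exact hF
  rw [this]
  exact MeasurableSet.iUnion fun F => MeasurableSet.iUnion fun _ => P.meas F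

lemma GoodMap.meas_prop (P : GoodMap m σ τ M N) (p : Finset (G ⧸ M) → Prop) :
    MeasurableSet {ω | p (P.Ψ ω)} := by
  haveI : Countable (G ⧸ M) := Quotient.countable
  have : {ω | p (P.Ψ ω)} = ⋃ (F : Finset (G ⧸ M)) (_ : p F), {ω | P.Ψ ω = F} := by
    ext ω
    simp only [Set.mem_setOf_eq, Set.mem_iUnion]
    constructor
    · intro h; exact ⟨P.Ψ ω, h, rfl⟩
    · rintro ⟨F, hF, hω⟩; rw [hω]; exact hF
  rw [this]
  exact MeasurableSet.iUnion fun F => MeasurableSet.iUnion fun _ => P.meas F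

lemma GoodMap.meas_prop₂ (P Q : GoodMap m σ τ M N) (p : Finset (G ⧸ M) → Finset (G ⧸ M) → Prop) :
    MeasurableSet {ω | p (P.Ψ ω) (Q.Ψ ω)} := by
  haveI : Countable (G ⧸ M) := Quotient.countable
  have : {ω | p (P.Ψ ω) (Q.Ψ ω)} = ⋃ (F₁ : Finset (G ⧸ M)) (F₂ : Finset (G ⧸ M)) (_ : p F₁ F₂),
      ({ω | P.Ψ ω = F₁} ∩ {ω | Q.Ψ ω = F₂}) := by
    ext ω
    simp only [Set.mem_setOf_eq, Set.mem_iUnion, Set.mem_inter_iff]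
    constructor
    · intro h; exact ⟨P.Ψ ω, Q.Ψ ω, h, rfl, rfl⟩
    · rintro ⟨F₁, F₂, hF, h₁, h₂⟩
      rw [h₁, h₂]; exact hF
  rw [this]
  exact MeasurableSet.iUnion fun F₁ => MeasurableSet.iUnion fun F₂ =>
    MeasurableSet.iUnion fun _ => (P.meas F₁).inter (Q.meas F₂)

/-- the energy of a good map over `Y₀`. -/
noncomputable def Ifun (m : Measure Ω) (Y₀ : Set Ω) (P : GoodMap m σ τ M N) : ℝ≥0∞ :=
  ∫⁻ ω in Y₀, fcard ((P.Ψ ω).card) ∂m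

lemma Ifun_le (Y₀ : Set Ω) (P : GoodMap m σ τ M N) : Ifun m Y₀ P ≤ m Y₀ := by
  calc Ifun m Y₀ P ≤ ∫⁻ _ω in Y₀, 1 ∂m := lintegral_mono fun ω => fcard_le_one _
    _ = m Y₀ := by simp

/-- the min-of-cardinalities combination function. -/
noncomputable def minval (F₁ F₂ : Finset (G ⧸ M)) : Finset (G ⧸ M) :=
  if F₂.card < F₁.card then F₂ else F₁

lemma minval_ne (F₁ F₂ : Finset (G ⧸ M)) (h₁ : F₁.Nonempty) (h₂ : F₂.Nonempty) :
    (minval F₁ F₂).Nonempty := by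
  unfold minval; split <;> assumption

lemma minval_eq (x : G ⧸ M) (F₁ F₂ : Finset (G ⧸ M)) :
    minval (lmul x F₁) (lmul x F₂) = lmul x (minval F₁ F₂) := by
  unfold minval
  rw [card_lmul, card_lmul]
  split <;> rfl

lemma minval_card_le_left (F₁ F₂ : Finset (G ⧸ M)) : (minval F₁ F₂).card ≤ F₁.card := by
  unfold minval; split <;> omega

lemma minval_card_le_right (F₁ F₂ : Finset (G ⧸ M)) : (minval F₁ F₂).card ≤ F₂.card := by
  unfold minval; split <;> omega

lemma minval_eq_or_lt (F₁ F₂ : Finset (G ⧸ M)) :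
    minval F₁ F₂ = F₁ ∨ (minval F₁ F₂).card < F₁.card := by
  unfold minval; split
  · right; assumption
  · left; rfl

lemma antitone_nat_eventually_constant (c : ℕ → ℕ) (hc : ∀ i, c (i + 1) ≤ c i) :
    ∃ i, ∀ j, i ≤ j → c j = c i := by
  have hmono : ∀ i j, i ≤ j → c j ≤ c i := by
    intro i j hij
    induction j with
    | zero =>
      have : i = 0 := by omega
      rw [this]
    | succ j ih =>
      rcases Nat.lt_or_ge i (j+1) with h | h
      · exact le_trans (hc j) (ih (by omega))
      · have : i = j + 1 := by omega
        rw [this]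
  have hne : (Set.range c).Nonempty := ⟨c 0, 0, rfl⟩
  obtain ⟨i, hi⟩ : ∃ i, c i = sInf (Set.range c) := by
    have := Nat.sInf_mem hne
    obtain ⟨i, hi⟩ := this
    exact ⟨i, hi⟩
  refine ⟨i, fun j hij => ?_⟩
  have h1 : c j ≤ c i := hmono i j hij
  have h2 : sInf (Set.range c) ≤ c j := Nat.sInf_le ⟨j, rfl⟩
  omega

end Minimal


section Minimal2

variable {G H Ω : Type*} [Group G] [Countable G] [Group H] [Countable H]
  [MeasurableSpace Ω] {M : Subgroup G} [M.Normal] {N : Subgroup H}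
  {m : Measure Ω} {σ : G → Ω → Ω} {τ : H → Ω → Ω}

/-- the pointwise eventual value of a stabilizing sequence of good maps. -/
noncomputable def limitMap (Λ : ℕ → GoodMap m σ τ M N)
    (hstab : ∀ ω : Ω, ∃ i, ∀ j, i ≤ j → (Λ j).Ψ ω = (Λ i).Ψ ω) :
    GoodMap m σ τ M N where
  Ψ := fun ω => (Λ (hstab ω).choose).Ψ ω
  meas := by
    intro F
    have key : ∀ ω : Ω, (Λ (hstab ω).choose).Ψ ω = F ↔
        ∃ i, ∀ j, i ≤ j → (Λ j).Ψ ω = F := by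
      intro ω
      constructor
      · intro h
        exact ⟨(hstab ω).choose, fun j hj => ((hstab ω).choose_spec j hj).trans h⟩
      · rintro ⟨i, hi⟩
        have h1 := hi (max i (hstab ω).choose) (le_max_left _ _)
        have h2 := (hstab ω).choose_spec (max i (hstab ω).choose) (le_max_right _ _)
        rw [← h2, h1]
    have : {ω | (Λ (hstab ω).choose).Ψ ω = F} =
        ⋃ i : ℕ, ⋂ j : ℕ, {ω | i ≤ j → (Λ j).Ψ ω = F} := by
      ext ω
      simp only [Set.mem_setOf_eq, Set.mem_iUnion, Set.mem_iInter, key ω]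
    rw [this]
    refine MeasurableSet.iUnion fun i => MeasurableSet.iInter fun j => ?_
    by_cases h : i ≤ j
    · simp only [h, true_implies]
      exact (Λ j).meas F
    · simp only [h, false_implies, Set.setOf_true]
      exact MeasurableSet.univ
  ne := fun ω => (Λ _).ne ω
  equiv := by
    intro g
    have hall : ∀ᵐ ω ∂m, ∀ i : ℕ, (Λ i).Ψ (σ g ω) = lmul (QuotientGroup.mk g) ((Λ i).Ψ ω) :=
      ae_all_iff.2 fun i => (Λ i).equiv g
    filter_upwards [hall] with ω hω
    set i₁ := (hstab ω).choose
    set i₂ := (hstab (σ g ω)).choose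
    have h1 := (hstab ω).choose_spec (max i₁ i₂) (le_max_left _ _)
    have h2 := (hstab (σ g ω)).choose_spec (max i₁ i₂) (le_max_right _ _)
    rw [← h1, ← h2]
    exact hω (max i₁ i₂)
  inv := by
    intro n
    have hall : ∀ᵐ ω ∂m, ∀ i : ℕ, (Λ i).Ψ (τ (n : H) ω) = (Λ i).Ψ ω :=
      ae_all_iff.2 fun i => (Λ i).inv n
    filter_upwards [hall] with ω hω
    set i₁ := (hstab ω).choose
    set i₂ := (hstab (τ (n : H) ω)).choose
    have h1 := (hstab ω).choose_spec (max i₁ i₂) (le_max_left _ _)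
    have h2 := (hstab (τ (n : H) ω)).choose_spec (max i₁ i₂) (le_max_right _ _)
    rw [← h1, ← h2]
    exact hω (max i₁ i₂)

lemma limitMap_card_le (Λ : ℕ → GoodMap m σ τ M N)
    (hstab : ∀ ω : Ω, ∃ i, ∀ j, i ≤ j → (Λ j).Ψ ω = (Λ i).Ψ ω)
    (hmono : ∀ i (ω : Ω), ((Λ (i + 1)).Ψ ω).card ≤ ((Λ i).Ψ ω).card)
    (i : ℕ) (ω : Ω) : (((limitMap Λ hstab).Ψ ω).card) ≤ ((Λ i).Ψ ω).card := by
  have hm : ∀ i j, i ≤ j → ((Λ j).Ψ ω).card ≤ ((Λ i).Ψ ω).card := by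
    intro i j hij
    induction j with
    | zero =>
      have : i = 0 := by omega
      rw [this]
    | succ j ih =>
      rcases Nat.lt_or_ge i (j + 1) with h | h
      · exact le_trans (hmono j ω) (ih (by omega))
      · have : i = j + 1 := by omega
        rw [this]
  have h1 := (hstab ω).choose_spec (max i (hstab ω).choose) (le_max_right _ _)
  show (((Λ (hstab ω).choose).Ψ ω).card) ≤ _
  rw [← h1]
  exact hm i _ (le_max_left _ _)

variable (hME : MECoupling G H m σ τ)

include hME in
/-- a set of positive measure that is a.e. invariant meets `Y₀` in positive measure. -/
lemma pos_inter_Y₀ {Y₀ : Set Ω} (hY₀m : MeasurableSet Y₀)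
    (hY₀fund : ∀ᵐ ω ∂m, ∃! g : G, σ g ω ∈ Y₀)
    {W : Set Ω} (hW : MeasurableSet W)
    (hinv : ∀ g : G, ∀ᵐ ω ∂m, (ω ∈ W ↔ σ g ω ∈ W))
    (hpos : m W ≠ 0) : m (W ∩ Y₀) ≠ 0 := by
  intro h0
  exact hpos (fd_null_of_null_inter hME.σ_one hME.σ_mul hME.σ_mp
    (fun g => (hME.σ_mp g).measurable) hY₀m hY₀fund hW hinv h0)

include hME in
theorem exists_minimal (P₀ : GoodMap m σ τ M N)
    {Y₀ : Set Ω} (hY₀m : MeasurableSet Y₀) (hY₀fin : m Y₀ < ⊤)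
    (hY₀fund : ∀ᵐ ω ∂m, ∃! g : G, σ g ω ∈ Y₀) :
    ∃ P : GoodMap m σ τ M N, ∀ Q : GoodMap m σ τ M N,
      ∀ᵐ ω ∂m, (P.Ψ ω).card ≤ (Q.Ψ ω).card := by
  classical
  haveI : Nonempty (GoodMap m σ τ M N) := ⟨P₀⟩
  set γ := ⨅ P : GoodMap m σ τ M N, Ifun m Y₀ P with hγ
  have hγ_top : γ < ⊤ :=
    lt_of_le_of_lt (le_trans (iInf_le _ P₀) (Ifun_le Y₀ P₀)) hY₀fin
  -- a sequence approaching the infimum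
  have hseq : ∀ i : ℕ, ∃ P : GoodMap m σ τ M N, Ifun m Y₀ P < γ + (2⁻¹ : ℝ≥0∞) ^ i := by
    intro i
    by_contra hcon
    push_neg at hcon
    have : γ + (2⁻¹ : ℝ≥0∞) ^ i ≤ γ := le_iInf hcon
    have hlt : γ < γ + (2⁻¹ : ℝ≥0∞) ^ i := by
      apply ENNReal.lt_add_right hγ_top.ne
      simp [pow_eq_zero_iff]
    exact absurd (lt_of_lt_of_le hlt this) (lt_irrefl _)
  choose Pseq hPseq using hseq
  -- greedy gluing
  let Λ : ℕ → GoodMap m σ τ M N := fun i =>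
    Nat.rec (Pseq 0) (fun i Pi => Pi.combine (Pseq (i + 1)) minval minval_ne minval_eq) i
  have hΛsucc : ∀ i, Λ (i + 1) = (Λ i).combine (Pseq (i + 1)) minval minval_ne minval_eq :=
    fun i => rfl
  have hΛval : ∀ i ω, (Λ (i + 1)).Ψ ω = minval ((Λ i).Ψ ω) ((Pseq (i + 1)).Ψ ω) :=
    fun i ω => rfl
  have hmono : ∀ i (ω : Ω), ((Λ (i + 1)).Ψ ω).card ≤ ((Λ i).Ψ ω).card := by
    intro i ω; rw [hΛval]; exact minval_card_le_left _ _
  have hstab : ∀ ω : Ω, ∃ i, ∀ j, i ≤ j → (Λ j).Ψ ω = (Λ i).Ψ ω := by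
    intro ω
    obtain ⟨i, hi⟩ := antitone_nat_eventually_constant (fun i => ((Λ i).Ψ ω).card)
      (fun i => hmono i ω)
    refine ⟨i, fun j hj => ?_⟩
    induction j with
    | zero =>
      have : i = 0 := by omega
      rw [this]
    | succ j ih =>
      rcases Nat.lt_or_ge i (j + 1) with h | h
      · have hj' : i ≤ j := by omega
        have hval := ih hj'
        rcases minval_eq_or_lt ((Λ j).Ψ ω) ((Pseq (j + 1)).Ψ ω) with he | hlt
        · rw [hΛval, he, hval]
        · exfalso
          have e1 : ((Λ (j+1)).Ψ ω).card = ((Λ i).Ψ ω).card := hi (j+1) (by omega)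
          have e2 : ((Λ j).Ψ ω).card = ((Λ i).Ψ ω).card := hi j hj'
          rw [hΛval] at e1
          omega
      · have : i = j + 1 := by omega
        rw [this]
  set P := limitMap Λ hstab with hP
  have hIP : ∀ i, Ifun m Y₀ P ≤ Ifun m Y₀ (Λ i) := by
    intro i
    apply lintegral_mono
    intro ω
    exact fcard_mono (limitMap_card_le Λ hstab hmono i ω)
  have hIΛ : ∀ i, Ifun m Y₀ (Λ i) ≤ Ifun m Y₀ (Pseq i) := by
    intro i
    cases i with
    | zero => exact le_refl _
    | succ i =>
      apply lintegral_mono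
      intro ω
      apply fcard_mono
      rw [hΛval]
      exact minval_card_le_right _ _
  have hIPγ : Ifun m Y₀ P ≤ γ := by
    refine ENNReal.le_of_forall_pos_le_add fun ε hε _ => ?_
    obtain ⟨i, hi⟩ := ENNReal.exists_inv_two_pow_lt (ENNReal.coe_ne_zero.2 hε.ne')
    calc Ifun m Y₀ P ≤ Ifun m Y₀ (Pseq i) := le_trans (hIP i) (hIΛ i)
      _ ≤ γ + (2⁻¹ : ℝ≥0∞) ^ i := le_of_lt (hPseq i)
      _ ≤ γ + ε := by
        apply add_le_add le_rfl
        calc (2⁻¹ : ℝ≥0∞) ^ i = 2⁻¹ ^ i := rfl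
          _ ≤ ε := le_of_lt (by simpa [ENNReal.inv_pow] using hi)
  have hIPeq : Ifun m Y₀ P = γ := le_antisymm hIPγ (iInf_le _ P)
  -- minimality
  refine ⟨P, fun Q => ?_⟩
  by_contra hcon
  set S := {ω | (Q.Ψ ω).card < (P.Ψ ω).card} with hS
  have hSmeas : MeasurableSet S := Q.meas_prop₂ P (fun F₁ F₂ => F₁.card < F₂.card)
  have hSpos : m S ≠ 0 := by
    intro h0
    apply hcon
    rw [ae_iff]
    convert h0 using 2
    ext ω
    simp [hS, not_le]
  have hSinv : ∀ g : G, ∀ᵐ ω ∂m, (ω ∈ S ↔ σ g ω ∈ S) := by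
    intro g
    filter_upwards [P.equiv g, Q.equiv g] with ω h1 h2
    simp only [hS, Set.mem_setOf_eq, h1, h2, card_lmul]
  have hSY₀ : m (S ∩ Y₀) ≠ 0 := pos_inter_Y₀ hME hY₀m hY₀fund hSmeas hSinv hSpos
  -- find a positive-measure cardinality level
  have hcover : (S ∩ Y₀) ⊆ ⋃ j : ℕ, (S ∩ {ω | (P.Ψ ω).card = j} ∩ Y₀) := by
    intro ω hω
    exact Set.mem_iUnion.2 ⟨(P.Ψ ω).card, ⟨hω.1, rfl⟩, hω.2⟩
  obtain ⟨j, hj⟩ : ∃ j : ℕ, m (S ∩ {ω | (P.Ψ ω).card = j} ∩ Y₀) ≠ 0 := by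
    by_contra hc
    push_neg at hc
    apply hSY₀
    refine measure_mono_null hcover ?_
    exact measure_iUnion_null fun j => hc j
  set D := S ∩ {ω | (P.Ψ ω).card = j} with hD
  have hDmeas : MeasurableSet D :=
    hSmeas.inter (P.meas_prop (fun F => F.card = j))
  set Pg := P.combine Q minval minval_ne minval_eq with hPg
  have hpoint : ∀ ω, fcard ((Pg.Ψ ω).card) + D.indicator (fun _ => (2⁻¹ : ℝ≥0∞) ^ j) ω ≤
      fcard ((P.Ψ ω).card) := by
    intro ω
    by_cases hω : ω ∈ D
    · rw [Set.indicator_of_mem hω]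
      obtain ⟨hωS, hωj⟩ := hω
      simp only [Set.mem_setOf_eq] at hωj hωS
      have hlt : (Q.Ψ ω).card < (P.Ψ ω).card := hωS
      have hPgval : (Pg.Ψ ω) = Q.Ψ ω := by
        show minval (P.Ψ ω) (Q.Ψ ω) = Q.Ψ ω
        unfold minval
        rw [if_pos hlt]
      rw [hPgval, hωj]
      exact fcard_gap (hωj ▸ hlt)
    · rw [Set.indicator_of_notMem hω, add_zero]
      apply fcard_mono
      exact minval_card_le_left _ _
  have hint : Ifun m Y₀ Pg + (2⁻¹ : ℝ≥0∞) ^ j * m (D ∩ Y₀) ≤ Ifun m Y₀ P := by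
    have e1 : ∫⁻ ω in Y₀, (fcard ((Pg.Ψ ω).card) + D.indicator (fun _ => (2⁻¹ : ℝ≥0∞) ^ j) ω) ∂m
        ≤ Ifun m Y₀ P := lintegral_mono hpoint
    rw [lintegral_add_right _ (Measurable.indicator measurable_const hDmeas)] at e1
    have e2 : ∫⁻ ω in Y₀, D.indicator (fun _ => (2⁻¹ : ℝ≥0∞) ^ j) ω ∂m
        = (2⁻¹ : ℝ≥0∞) ^ j * m (D ∩ Y₀) := by
      rw [lintegral_indicator hDmeas]
      simp [Measure.restrict_restrict hDmeas]
    rw [e2] at e1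
    exact e1
  have hγle : γ ≤ Ifun m Y₀ Pg := iInf_le _ Pg
  have hPgfin : Ifun m Y₀ Pg ≠ ⊤ := (lt_of_le_of_lt (Ifun_le Y₀ Pg) hY₀fin).ne
  have : Ifun m Y₀ Pg + (2⁻¹ : ℝ≥0∞) ^ j * m (D ∩ Y₀) ≤ Ifun m Y₀ Pg := by
    calc Ifun m Y₀ Pg + (2⁻¹ : ℝ≥0∞) ^ j * m (D ∩ Y₀) ≤ Ifun m Y₀ P := hint
      _ = γ := hIPeq
      _ ≤ Ifun m Y₀ Pg := hγle
  have hzero : (2⁻¹ : ℝ≥0∞) ^ j * m (D ∩ Y₀) = 0 := by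
    have h0 : Ifun m Y₀ Pg + (2⁻¹ : ℝ≥0∞) ^ j * m (D ∩ Y₀) ≤ Ifun m Y₀ Pg + 0 := by
      simpa using this
    have h1 := (ENNReal.add_le_add_iff_left hPgfin).mp h0
    exact le_zero_iff.mp h1
  rw [mul_eq_zero] at hzero
  rcases hzero with h | h
  · exact absurd h (by simp [pow_eq_zero_iff])
  · rw [Set.inter_assoc] at hj
    exact hj (by rw [← Set.inter_assoc]; exact h)

end Minimal2


section FinsetAlg3
variable {Γ : Type*} [Group Γ]

lemma lmul_singleton (x u : Γ) : lmul x ({u} : Finset Γ) = {x * u} := by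
  ext y
  simp only [mem_lmul, Finset.mem_singleton]
  constructor
  · intro h; rw [show y = x * (x⁻¹ * y) by group, h]
  · intro h; rw [h]; group

end FinsetAlg3

section Partition

variable {G H Ω : Type*} [Group G] [Countable G] [Group H] [Countable H]
  [MeasurableSpace Ω] {M : Subgroup G} [M.Normal] {N : Subgroup H}
  {m : Measure Ω} {σ : G → Ω → Ω} {τ : H → Ω → Ω}
  (hME : MECoupling G H m σ τ)

/-- minimality of a good map -/
def IsMinimalGM (P : GoodMap m σ τ M N) : Prop :=
  ∀ Q : GoodMap m σ τ M N, ∀ᵐ ω ∂m, (P.Ψ ω).card ≤ (Q.Ψ ω).card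

include hME

lemma minimal_card_tau [N.Normal] {P : GoodMap m σ τ M N} (hmin : IsMinimalGM P) (h : H) :
    ∀ᵐ ω ∂m, (P.Ψ (τ h ω)).card = (P.Ψ ω).card := by
  have h1 : ∀ᵐ ω ∂m, (P.Ψ ω).card ≤ (P.Ψ (τ h ω)).card := hmin (P.compTau hME h)
  have h2 : ∀ᵐ ω ∂m, (P.Ψ ω).card ≤ (P.Ψ (τ h⁻¹ ω)).card := hmin (P.compTau hME h⁻¹)
  have h3 := ae_comp (hME.τ_mp h) h2
  filter_upwards [h1, h3] with ω e1 e2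
  rw [tau_inv_cancel hME h ω] at e2
  omega

lemma minimal_translate [N.Normal] {P : GoodMap m σ τ M N} (hmin : IsMinimalGM P)
    (h : H) (δ : G ⧸ M) :
    ∀ᵐ ω ∂m, (∃ y, y ∈ P.Ψ (τ h ω) ∧ y ∈ rmul (P.Ψ ω) δ) →
      P.Ψ (τ h ω) = rmul (P.Ψ ω) δ := by
  classical
  set Q := P.compTau hME h with hQ
  set val : Finset (G ⧸ M) → Finset (G ⧸ M) → Finset (G ⧸ M) := fun F₁ F₂ =>
    if (interF F₁ (rmul F₂ δ)).Nonempty ∧ F₁ ≠ rmul F₂ δ then interF F₁ (rmul F₂ δ) else F₁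
    with hval
  have hval_ne : ∀ F₁ F₂ : Finset (G ⧸ M), F₁.Nonempty → F₂.Nonempty → (val F₁ F₂).Nonempty := by
    intro F₁ F₂ h₁ h₂
    rw [hval]
    simp only
    split
    · next hc => exact hc.1
    · exact h₁
  have hval_eq : ∀ (x : G ⧸ M) F₁ F₂, val (lmul x F₁) (lmul x F₂) = lmul x (val F₁ F₂) := by
    intro x F₁ F₂
    rw [hval]
    simp only
    rw [← lmul_rmul, interF_lmul]
    have hcond : ((lmul x (interF F₁ (rmul F₂ δ))).Nonempty ∧ lmul x F₁ ≠ lmul x (rmul F₂ δ)) ↔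
        ((interF F₁ (rmul F₂ δ)).Nonempty ∧ F₁ ≠ rmul F₂ δ) := by
      rw [lmul_nonempty_iff]
      constructor
      · rintro ⟨hc1, hc2⟩
        exact ⟨hc1, fun he => hc2 (by rw [he])⟩
      · rintro ⟨hc1, hc2⟩
        exact ⟨hc1, fun he => hc2 (lmul_injective x he)⟩
    by_cases hcase : (interF F₁ (rmul F₂ δ)).Nonempty ∧ F₁ ≠ rmul F₂ δ
    · rw [if_pos (hcond.2 hcase), if_pos hcase]
    · rw [if_neg (fun hh => hcase (hcond.1 hh)), if_neg hcase]
  set R := Q.combine P val hval_ne hval_eq with hR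
  have hcardQ : ∀ᵐ ω ∂m, (Q.Ψ ω).card = (P.Ψ ω).card := minimal_card_tau hME hmin h
  have hminR : ∀ᵐ ω ∂m, (P.Ψ ω).card ≤ (R.Ψ ω).card := hmin R
  filter_upwards [hcardQ, hminR] with ω e1 e2
  intro ⟨y, hy1, hy2⟩
  show Q.Ψ ω = rmul (P.Ψ ω) δ
  by_contra hne
  have hcond : (interF (Q.Ψ ω) (rmul (P.Ψ ω) δ)).Nonempty ∧ Q.Ψ ω ≠ rmul (P.Ψ ω) δ :=
    ⟨⟨y, mem_interF.2 ⟨hy1, hy2⟩⟩, hne⟩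
  have hRval : R.Ψ ω = interF (Q.Ψ ω) (rmul (P.Ψ ω) δ) := by
    show val (Q.Ψ ω) (P.Ψ ω) = _
    rw [hval]
    simp only
    rw [if_pos hcond]
  have hsubset : interF (Q.Ψ ω) (rmul (P.Ψ ω) δ) ⊆ Q.Ψ ω := interF_subset_left _ _
  have hproper : interF (Q.Ψ ω) (rmul (P.Ψ ω) δ) ≠ Q.Ψ ω := by
    intro heq
    apply hne
    have hsub2 : Q.Ψ ω ⊆ rmul (P.Ψ ω) δ := by
      intro z hz
      rw [← heq] at hz
      exact (mem_interF.1 hz).2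
    apply Finset.eq_of_subset_of_card_le hsub2
    rw [card_rmul, ← e1]
  have hlt : (interF (Q.Ψ ω) (rmul (P.Ψ ω) δ)).card < (Q.Ψ ω).card :=
    Finset.card_lt_card (Finset.ssubset_iff_subset_ne.2 ⟨hsubset, hproper⟩)
  rw [hRval] at e2
  omega

lemma minimal_translate_exists [N.Normal] {P : GoodMap m σ τ M N} (hmin : IsMinimalGM P)
    (h : H) : ∀ᵐ ω ∂m, ∃ δ : G ⧸ M, P.Ψ (τ h ω) = rmul (P.Ψ ω) δ := by
  haveI : Countable (G ⧸ M) := Quotient.countable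
  have hall : ∀ᵐ ω ∂m, ∀ δ : G ⧸ M, (∃ y, y ∈ P.Ψ (τ h ω) ∧ y ∈ rmul (P.Ψ ω) δ) →
      P.Ψ (τ h ω) = rmul (P.Ψ ω) δ := ae_all_iff.2 fun δ => minimal_translate hME hmin h δ
  filter_upwards [hall] with ω hω
  obtain ⟨u, hu⟩ := P.ne (τ h ω)
  obtain ⟨u₀, hu₀⟩ := P.ne ω
  refine ⟨u₀⁻¹ * u, hω _ ⟨u, hu, mem_rmul.2 ?_⟩⟩
  rw [show u * (u₀⁻¹ * u)⁻¹ = u₀ by group]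
  exact hu₀

lemma minimal_rigid [N.Normal] {P : GoodMap m σ τ M N} (hmin : IsMinimalGM P) :
    ∀ᵐ ω ∂m, ∀ δ : G ⧸ M, (∃ y, y ∈ P.Ψ ω ∧ y ∈ rmul (P.Ψ ω) δ) →
      P.Ψ ω = rmul (P.Ψ ω) δ := by
  haveI : Countable (G ⧸ M) := Quotient.countable
  have hall : ∀ᵐ ω ∂m, ∀ δ : G ⧸ M, (∃ y, y ∈ P.Ψ (τ 1 ω) ∧ y ∈ rmul (P.Ψ ω) δ) →
      P.Ψ (τ 1 ω) = rmul (P.Ψ ω) δ := ae_all_iff.2 fun δ => minimal_translate hME hmin 1 δ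
  filter_upwards [hall] with ω hω
  have e : τ (1 : H) ω = ω := by rw [hME.τ_one]; rfl
  rw [e] at hω
  exact hω

end Partition


section ICCCore

variable {G H Ω : Type*} [Group G] [Countable G] [Group H] [Countable H]
  [MeasurableSpace Ω] {M : Subgroup G} [M.Normal] {N : Subgroup H} [N.Normal]
  {m : Measure Ω} {σ : G → Ω → Ω} {τ : H → Ω → Ω}
  (hME : MECoupling G H m σ τ)

include hME

lemma Tstab_tau_inv {P : GoodMap m σ τ M N} (hmin : IsMinimalGM P) (h : H) :
    ∀ᵐ ω ∂m, Tstab (P.Ψ (τ h ω)) = Tstab (P.Ψ ω) := by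
  filter_upwards [minimal_translate_exists hME hmin h] with ω hω
  obtain ⟨δ, hδ⟩ := hω
  rw [hδ, Tstab_rmul (P.ne ω)]

lemma Tstab_sigma_conj {P : GoodMap m σ τ M N} (g : G) :
    ∀ᵐ ω ∂m, ∀ v : G ⧸ M, v ∈ Tstab (P.Ψ (σ g ω)) ↔
      (QuotientGroup.mk g)⁻¹ * v * QuotientGroup.mk g ∈ Tstab (P.Ψ ω) := by
  filter_upwards [P.equiv g] with ω hω v
  rw [hω, mem_Tstab_lmul (P.ne ω)]

lemma card_le_Tstab_ae {P : GoodMap m σ τ M N} (hmin : IsMinimalGM P) :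
    ∀ᵐ ω ∂m, (P.Ψ ω).card ≤ (Tstab (P.Ψ ω)).card := by
  filter_upwards [minimal_rigid hME hmin] with ω hω
  exact card_le_card_Tstab (P.ne ω) fun δ hδ => (hω δ hδ).symm ▸ (hω δ hδ)

/-- the key ICC step: a minimal good map has singleton values a.e. -/
theorem minimal_card_one (hICC : IsICC (G ⧸ M)) {P : GoodMap m σ τ M N}
    (hmin : IsMinimalGM P) : ∀ᵐ ω ∂m, (P.Ψ ω).card = 1 := by
  classical
  haveI : Countable (G ⧸ M) := Quotient.countable
  obtain ⟨X, hXm, hXfin, hXfund⟩ := hME.exists_dom_H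
  -- the level sets
  set A : (G ⧸ M) → ℕ → Set Ω := fun v j => {ω | v ∈ Tstab (P.Ψ ω) ∧ (P.Ψ ω).card = j}
    with hA
  have hAmeas : ∀ v j, MeasurableSet (A v j) :=
    fun v j => P.meas_prop (fun F => v ∈ Tstab F ∧ F.card = j)
  have hAtau : ∀ (v : G ⧸ M) (j : ℕ) (h : H), ∀ᵐ ω ∂m, (ω ∈ A v j ↔ τ h ω ∈ A v j) := by
    intro v j h
    filter_upwards [Tstab_tau_inv hME hmin h, minimal_card_tau hME hmin h] with ω e1 e2
    simp only [hA, Set.mem_setOf_eq, e1, e2]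
  -- conjugation invariance of the masses
  have hconj : ∀ (g : G) (v : G ⧸ M) (j : ℕ),
      m (A (QuotientGroup.mk g * v * (QuotientGroup.mk g)⁻¹) j ∩ X) = m (A v j ∩ X) := by
    intro g v j
    set v' := QuotientGroup.mk g * v * (QuotientGroup.mk g)⁻¹ with hv'
    have hcardg : ∀ᵐ ω ∂m, (P.Ψ (σ g ω)).card = (P.Ψ ω).card := by
      filter_upwards [P.equiv g] with ω hω
      rw [hω, card_lmul]
    have step1 : ∀ᵐ ω ∂m, (σ g ω ∈ A v' j ↔ ω ∈ A v j) := by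
      filter_upwards [Tstab_sigma_conj hME (P := P) g, hcardg] with ω e1 e2
      simp only [hA, Set.mem_setOf_eq, e1 v', e2, hv']
      constructor
      · rintro ⟨h1, h2⟩
        refine ⟨?_, h2⟩
        rwa [e1, show (QuotientGroup.mk g)⁻¹ * (QuotientGroup.mk g * v * (QuotientGroup.mk g)⁻¹) *
          QuotientGroup.mk g = v by group] at h1
      · rintro ⟨h1, h2⟩
        refine ⟨?_, h2⟩
        rwa [e1, show (QuotientGroup.mk g)⁻¹ * (QuotientGroup.mk g * v * (QuotientGroup.mk g)⁻¹) *
          QuotientGroup.mk g = v by group]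
    have step2 : ∀ᵐ ω ∂m, (ω ∈ A v' j ↔ σ g⁻¹ ω ∈ A v j) := by
      have := ae_comp (hME.σ_mp g⁻¹) step1
      filter_upwards [this] with ω hω
      have e : σ g (σ g⁻¹ ω) = ω := by
        have := sigma_inv_cancel hME g⁻¹ ω
        rwa [inv_inv] at this
      rwa [e] at hω
    -- X' is also a fundamental domain for τ
    set X' := σ g⁻¹ ⁻¹' X with hX'
    have hX'm : MeasurableSet X' := (hME.σ_mp g⁻¹).measurable hXm
    have hX'fund : ∀ᵐ ω ∂m, ∃! h : H, τ h ω ∈ X' := by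
      have := ae_comp (hME.σ_mp g⁻¹) hXfund
      filter_upwards [this] with ω hω
      have e : ∀ h : H, (τ h ω ∈ X' ↔ τ h (σ g⁻¹ ω) ∈ X) := by
        intro h
        simp only [hX', Set.mem_preimage]
        rw [sigma_tau_comm hME g⁻¹ h ω]
      obtain ⟨h₀, hh₀, hu⟩ := hω
      exact ⟨h₀, (e h₀).2 hh₀, fun h' hh' => hu h' ((e h').1 hh')⟩
    have ex1 : m (A v' j ∩ X) = m (A v' j ∩ X') :=
      fd_exchange hME.τ_one hME.τ_mul hME.τ_mp (fun h => (hME.τ_mp h).measurable)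
        hXm hX'm hXfund hX'fund (hAmeas v' j) (hAtau v' j)
    have ex2 : m (A v' j ∩ X') = m (σ g⁻¹ ⁻¹' (A v j ∩ X)) := by
      refine measure_congr (eventuallyEq_set.2 ?_)
      filter_upwards [step2] with ω hω
      simp only [Set.mem_inter_iff, Set.mem_preimage, hX']
      rw [hω]
    rw [ex1, ex2, (hME.σ_mp g⁻¹).measure_preimage ((hAmeas v j).inter hXm).nullMeasurableSet]
  -- the counting bound
  have hbound : ∀ (v : G ⧸ M) (j : ℕ) (S : Finset (G ⧸ M)),
      (∀ v' ∈ S, ∃ k : G ⧸ M, k * v * k⁻¹ = v') →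
      (S.card : ℝ≥0∞) * m (A v j ∩ X) ≤ (j * j : ℕ) * m X := by
    intro v j S hS
    have heach : ∀ v' ∈ S, m (A v' j ∩ X) = m (A v j ∩ X) := by
      intro v' hv'
      obtain ⟨k, hk⟩ := hS v' hv'
      obtain ⟨g, rfl⟩ := QuotientGroup.mk_surjective k
      rw [← hk]
      exact hconj g v j
    have e1 : (S.card : ℝ≥0∞) * m (A v j ∩ X) = ∑ v' ∈ S, m (A v' j ∩ X) := by
      rw [Finset.sum_congr rfl heach, Finset.sum_const, nsmul_eq_mul]
    rw [e1]
    have e2 : ∀ v' : G ⧸ M, m (A v' j ∩ X) =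
        ∫⁻ ω, (A v' j ∩ X).indicator (fun _ => (1 : ℝ≥0∞)) ω ∂m := by
      intro v'
      rw [lintegral_indicator ((hAmeas v' j).inter hXm)]
      simp
    calc ∑ v' ∈ S, m (A v' j ∩ X)
        = ∑ v' ∈ S, ∫⁻ ω, (A v' j ∩ X).indicator (fun _ => (1 : ℝ≥0∞)) ω ∂m :=
          Finset.sum_congr rfl fun v' _ => e2 v'
      _ = ∫⁻ ω, ∑ v' ∈ S, (A v' j ∩ X).indicator (fun _ => (1 : ℝ≥0∞)) ω ∂m :=
          (lintegral_finset_sum S fun v' _ =>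
            (measurable_const.indicator ((hAmeas v' j).inter hXm))).symm
      _ ≤ ∫⁻ ω, (j * j : ℕ) * X.indicator (fun _ => (1 : ℝ≥0∞)) ω ∂m := by
          apply lintegral_mono
          intro ω
          dsimp only
          by_cases hX : ω ∈ X
          · rw [Set.indicator_of_mem hX, mul_one]
            have eind : ∀ v' : G ⧸ M, (A v' j ∩ X).indicator (fun _ => (1 : ℝ≥0∞)) ω =
                if v' ∈ Tstab (P.Ψ ω) ∧ (P.Ψ ω).card = j then 1 else 0 := by
              intro v'
              by_cases hv : v' ∈ Tstab (P.Ψ ω) ∧ (P.Ψ ω).card = j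
              · rw [if_pos hv, Set.indicator_of_mem (show ω ∈ A v' j ∩ X from ⟨hv, hX⟩)]
              · rw [if_neg hv, Set.indicator_of_notMem (show ω ∉ A v' j ∩ X from fun hc => hv hc.1)]
            rw [Finset.sum_congr rfl fun v' _ => eind v']
            rw [Finset.sum_boole]
            by_cases hcard : (P.Ψ ω).card = j
            · have hsub : S.filter (fun v' => v' ∈ Tstab (P.Ψ ω) ∧ (P.Ψ ω).card = j)
                  ⊆ Tstab (P.Ψ ω) := by
                intro x hx
                exact (Finset.mem_filter.1 hx).2.1
              have hle := Finset.card_le_card hsub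
              have hle2 := card_Tstab_le (P.Ψ ω)
              rw [hcard] at hle2
              have : (S.filter (fun v' => v' ∈ Tstab (P.Ψ ω) ∧ (P.Ψ ω).card = j)).card
                  ≤ j * j := le_trans hle hle2
              exact_mod_cast Nat.cast_le.2 this
            · have : S.filter (fun v' => v' ∈ Tstab (P.Ψ ω) ∧ (P.Ψ ω).card = j) = ∅ := by
                apply Finset.filter_false_of_mem
                intro x hx hc
                exact hcard hc.2
              rw [this]
              simp
          · have : ∀ v' : G ⧸ M, (A v' j ∩ X).indicator (fun _ => (1 : ℝ≥0∞)) ω = 0 := by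
              intro v'
              exact Set.indicator_of_notMem (fun hc => hX hc.2) _
            rw [Finset.sum_congr rfl fun v' _ => this v', Set.indicator_of_notMem hX]
            simp
      _ = (j * j : ℕ) * m X := by
          rw [lintegral_const_mul _ (measurable_const.indicator hXm),
            lintegral_indicator hXm]
          simp
  -- vanishing for nontrivial v
  have hzero : ∀ (v : G ⧸ M), v ≠ 1 → ∀ j : ℕ, m (A v j ∩ X) = 0 := by
    intro v hv j
    by_contra hw
    set w := m (A v j ∩ X) with hwdef
    have hwfin : w ≠ ⊤ := (lt_of_le_of_lt (measure_mono Set.inter_subset_right) hXfin).ne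
    set C := ((j * j : ℕ) : ℝ≥0∞) * m X with hC
    have hCfin : C ≠ ⊤ := ENNReal.mul_ne_top (ENNReal.natCast_ne_top _) hXfin.ne
    obtain ⟨n, hn⟩ := ENNReal.exists_nat_gt (ENNReal.div_lt_top hCfin hw).ne
    obtain ⟨S, hSsub, hScard⟩ := (hICC v hv).exists_subset_card_eq n
    have hSconj : ∀ v' ∈ S, ∃ k : G ⧸ M, k * v * k⁻¹ = v' := fun v' hv' => hSsub hv'
    have hb := hbound v j S hSconj
    rw [hScard] at hb
    have hlt : C < n * w := by
      have h2 := (ENNReal.div_lt_iff (Or.inl hw) (Or.inl hwfin)).mp hn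
      first
      | exact h2
      | rwa [mul_comm] at h2
    exact absurd (lt_of_lt_of_le hlt hb) (lt_irrefl _)
  -- the bad set is null
  set Bad := {ω | ∃ v : G ⧸ M, v ∈ Tstab (P.Ψ ω) ∧ v ≠ 1} with hBad
  have hBadmeas : MeasurableSet Bad :=
    P.meas_prop (fun F => ∃ v : G ⧸ M, v ∈ Tstab F ∧ v ≠ 1)
  have hBadX : m (Bad ∩ X) = 0 := by
    have hsub : Bad ∩ X ⊆ ⋃ (v : {v : G ⧸ M // v ≠ 1}) (j : ℕ), (A (v : G ⧸ M) j ∩ X) := by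
      rintro ω ⟨⟨v, hvT, hv1⟩, hωX⟩
      exact Set.mem_iUnion.2 ⟨⟨v, hv1⟩, Set.mem_iUnion.2 ⟨(P.Ψ ω).card, ⟨hvT, rfl⟩, hωX⟩⟩
    refine measure_mono_null hsub ?_
    refine measure_iUnion_null fun v => measure_iUnion_null fun j => hzero v v.2 j
  have hBadnull : m Bad = 0 := by
    refine fd_null_of_null_inter hME.τ_one hME.τ_mul hME.τ_mp
      (fun h => (hME.τ_mp h).measurable) hXm hXfund hBadmeas ?_ hBadX
    intro h
    filter_upwards [Tstab_tau_inv hME hmin h] with ω e1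
    simp only [hBad, Set.mem_setOf_eq, e1]
  -- conclusion
  have hae : ∀ᵐ ω ∂m, ω ∉ Bad := by
    rw [ae_iff]
    simpa using hBadnull
  filter_upwards [hae, card_le_Tstab_ae hME hmin] with ω h1 h2
  have hT1 : Tstab (P.Ψ ω) ⊆ {1} := by
    intro v hv
    simp only [Finset.mem_singleton]
    by_contra hv1
    exact h1 ⟨v, hv, hv1⟩
  have hTcard : (Tstab (P.Ψ ω)).card ≤ 1 := by
    calc (Tstab (P.Ψ ω)).card ≤ ({1} : Finset (G ⧸ M)).card := Finset.card_le_card hT1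
      _ = 1 := Finset.card_singleton 1
  have hge : 1 ≤ (P.Ψ ω).card := Finset.card_pos.2 (P.ne ω)
  omega

/-- existence of an equivariant singleton-valued map. -/
theorem exists_E (hICC : IsICC (G ⧸ M)) (P₀ : GoodMap m σ τ M N)
    {Y₀ : Set Ω} (hY₀m : MeasurableSet Y₀) (hY₀fin : m Y₀ < ⊤)
    (hY₀fund : ∀ᵐ ω ∂m, ∃! g : G, σ g ω ∈ Y₀) :
    ∃ E : Ω → G ⧸ M, (∀ u : G ⧸ M, MeasurableSet {ω | E ω = u}) ∧
      (∀ g : G, ∀ᵐ ω ∂m, E (σ g ω) = QuotientGroup.mk g * E ω) ∧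
      (∀ n : N, ∀ᵐ ω ∂m, E (τ (n : H) ω) = E ω) := by
  classical
  obtain ⟨P, hmin⟩ := exists_minimal hME P₀ hY₀m hY₀fin hY₀fund
  have hone := minimal_card_one hME hICC hmin
  set f : Finset (G ⧸ M) → G ⧸ M := fun F => if h : ∃ u, F = {u} then h.choose else 1 with hf
  refine ⟨fun ω => f (P.Ψ ω), fun u => P.meas_prop (fun F => f F = u), ?_, ?_⟩
  · intro g
    have hsing : ∀ᵐ ω ∂m, P.Ψ ω = {f (P.Ψ ω)} := by
      filter_upwards [hone] with ω h1
      obtain ⟨u, hu⟩ := Finset.card_eq_one.mp h1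
      have he : ∃ u', P.Ψ ω = {u'} := ⟨u, hu⟩
      simp only [hf, dif_pos he]
      exact he.choose_spec
    filter_upwards [hsing, ae_comp (hME.σ_mp g) hsing, P.equiv g] with ω h1 h2 h3
    have : ({f (P.Ψ (σ g ω))} : Finset (G ⧸ M)) = {QuotientGroup.mk g * f (P.Ψ ω)} := by
      rw [← h2, h3]
      conv_lhs => rw [h1]
      rw [lmul_singleton]
    exact Finset.singleton_injective this
  · intro n
    have hsing : ∀ᵐ ω ∂m, P.Ψ ω = {f (P.Ψ ω)} := by
      filter_upwards [hone] with ω h1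
      obtain ⟨u, hu⟩ := Finset.card_eq_one.mp h1
      have he : ∃ u', P.Ψ ω = {u'} := ⟨u, hu⟩
      simp only [hf, dif_pos he]
      exact he.choose_spec
    filter_upwards [hsing, ae_comp (hME.τ_mp (n : H)) hsing, P.inv n] with ω h1 h2 h3
    have : ({f (P.Ψ (τ (n : H) ω))} : Finset (G ⧸ M)) = {f (P.Ψ ω)} := by
      rw [← h2, h3]
      exact h1
    exact Finset.singleton_injective this

end ICCCore


section Front

variable {G H Ω : Type*} [Group G] [Countable G] [Group H] [Countable H]
  [MeasurableSpace Ω] {M : Subgroup G} [M.Normal] {N : Subgroup H}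
  {m : Measure Ω} {σ : G → Ω → Ω} {τ : H → Ω → Ω}
  (hME : MECoupling G H m σ τ)

open Classical in
/-- canonical choice of the group element moving `ω` into `Y₀`. -/
noncomputable def rmap (σ : G → Ω → Ω) (Y₀ : Set Ω) : Ω → G := fun ω =>
  if h : ∃! g : G, σ g ω ∈ Y₀ then h.exists.choose else 1

lemma rmap_spec {Y₀ : Set Ω} {ω : Ω} (h : ∃! g : G, σ g ω ∈ Y₀) :
    σ (rmap σ Y₀ ω) ω ∈ Y₀ := by
  classical
  rw [rmap]
  rw [dif_pos h]
  exact h.exists.choose_spec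

lemma rmap_unique {Y₀ : Set Ω} {ω : Ω} (h : ∃! g : G, σ g ω ∈ Y₀) {g : G}
    (hg : σ g ω ∈ Y₀) : g = rmap σ Y₀ ω := by
  obtain ⟨g₀, hg₀, hu⟩ := id h
  have e1 : g = g₀ := hu g hg
  have e2 : rmap σ Y₀ ω = g₀ := hu _ (rmap_spec h)
  rw [e1, e2]

include hME

lemma sigma_apply_mul (a b : G) (ω : Ω) : σ a (σ b ω) = σ (a * b) ω := by
  rw [hME.σ_mul]; rfl

lemma tau_apply_mul (a b : H) (ω : Ω) : τ a (τ b ω) = τ (a * b) ω := by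
  rw [hME.τ_mul]; rfl

lemma U_sigma_inv {Y₀ : Set Ω} {ω : Ω} (h : ∃! g : G, σ g ω ∈ Y₀) (g₀ : G) :
    ∃! g : G, σ g (σ g₀ ω) ∈ Y₀ := by
  obtain ⟨g, hg, hu⟩ := h
  refine ⟨g * g₀⁻¹, ?_, ?_⟩
  · show σ (g * g₀⁻¹) (σ g₀ ω) ∈ Y₀
    rw [sigma_apply_mul hME]
    simpa [mul_assoc] using hg
  · intro g' hg'
    have hg'' : σ (g' * g₀) ω ∈ Y₀ := by
      rw [← sigma_apply_mul hME]
      exact hg'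
    have := hu (g' * g₀) hg''
    have : g' = g * g₀⁻¹ := by
      rw [← this]
      group
    exact this

lemma rmap_sigma {Y₀ : Set Ω} {ω : Ω} (h : ∃! g : G, σ g ω ∈ Y₀) (g₀ : G) :
    rmap σ Y₀ (σ g₀ ω) = rmap σ Y₀ ω * g₀⁻¹ := by
  refine (rmap_unique (U_sigma_inv hME h g₀) ?_).symm
  rw [sigma_apply_mul hME]
  simpa [mul_assoc] using rmap_spec h

open Classical in
/-- construction of the initial good map from the trivializing map `φ`. -/
noncomputable def PhiMap (σ : G → Ω → Ω) (Y₀ : Set Ω) (φ : Ω → Finset (G ⧸ M)) :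
    Ω → Finset (G ⧸ M) :=
  fun ω => if ∃! g : G, σ g ω ∈ Y₀ then
    lmul ((QuotientGroup.mk (rmap σ Y₀ ω) : G ⧸ M))⁻¹ (φ (σ (rmap σ Y₀ ω) ω)) else {1}

omit hME in
lemma PhiMap_meas {Y₀ : Set Ω} (hY₀m : MeasurableSet Y₀)
    (hσmeas : ∀ g : G, Measurable (σ g))
    {φ : Ω → Finset (G ⧸ M)} (hφmeas : ∀ F : Finset (G ⧸ M), MeasurableSet {x | φ x = F})
    (F : Finset (G ⧸ M)) : MeasurableSet {ω | PhiMap σ Y₀ φ ω = F} := by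
  classical
  haveI : Countable (G ⧸ M) := Quotient.countable
  set U : Set Ω := fdGood σ Y₀ with hU
  have hUm : MeasurableSet U := fdGood_measurable hσmeas hY₀m
  have hdecomp : {ω | PhiMap σ Y₀ φ ω = F} =
      (Uᶜ ∩ (if ({1} : Finset (G ⧸ M)) = F then Set.univ else ∅)) ∪
      ⋃ g : G, ((U ∩ σ g ⁻¹' Y₀) ∩
        (σ g ⁻¹' (⋃ (F' : Finset (G ⧸ M))
          (_ : lmul ((QuotientGroup.mk g : G ⧸ M))⁻¹ F' = F), {x | φ x = F'}))) := by
    ext ω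
    simp only [Set.mem_setOf_eq, Set.mem_union, Set.mem_inter_iff, Set.mem_compl_iff,
      Set.mem_iUnion, Set.mem_preimage, PhiMap]
    constructor
    · intro hval
      by_cases hω : ∃! g : G, σ g ω ∈ Y₀
      · rw [if_pos hω] at hval
        right
        refine ⟨rmap σ Y₀ ω, ⟨(show ω ∈ fdGood σ Y₀ from hω), rmap_spec hω⟩,
          φ (σ (rmap σ Y₀ ω) ω), hval, rfl⟩
      · rw [if_neg hω] at hval
        left
        refine ⟨(show ω ∉ fdGood σ Y₀ from hω), ?_⟩
        rw [if_pos hval]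
        trivial
    · rintro (⟨hω, hite⟩ | ⟨g, ⟨hω, hgY⟩, F', hF', hφω⟩)
      · have hω' : ¬ (∃! g : G, σ g ω ∈ Y₀) := hω
        split at hite
        · next h1F =>
          rw [if_neg hω']
          exact h1F
        · exact absurd hite (Set.notMem_empty ω)
      · have hω' : ∃! g : G, σ g ω ∈ Y₀ := hω
        have hg : g = rmap σ Y₀ ω := rmap_unique hω' hgY
        rw [if_pos hω', ← hg, hφω]
        exact hF'
  rw [hdecomp]
  refine MeasurableSet.union ?_ ?_
  · refine hUm.compl.inter ?_
    split
    · exact MeasurableSet.univ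
    · exact MeasurableSet.empty
  · refine MeasurableSet.iUnion fun g => ?_
    refine ((hUm.inter ((hσmeas g) hY₀m)).inter ((hσmeas g) ?_))
    exact MeasurableSet.iUnion fun F' => MeasurableSet.iUnion fun _ => hφmeas F'

/-- `PhiMap` is a good map. -/
noncomputable def PhiGoodMap [N.Normal] {Y₀ : Set Ω} (hY₀m : MeasurableSet Y₀)
    (hY₀fund : ∀ᵐ ω ∂m, ∃! g : G, σ g ω ∈ Y₀)
    (a : H → Ω → Ω) (c : H → Ω → G)
    (h_ind : ∀ h : H, ∀ᵐ ω ∂m.restrict Y₀, a h ω ∈ Y₀ ∧ a h ω = τ h (σ (c h ω) ω))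
    {φ : Ω → Finset (G ⧸ M)} (hφmeas : ∀ F : Finset (G ⧸ M), MeasurableSet {x | φ x = F})
    (hφne : ∀ x, (φ x).Nonempty)
    (hφequiv : ∀ n : N, ∀ᵐ x ∂m.restrict Y₀,
      (φ (a (n : H) x) : Set (G ⧸ M)) =
        (fun u => (QuotientGroup.mk (c (n : H) x) : G ⧸ M) * u) '' (φ x : Set (G ⧸ M))) :
    GoodMap m σ τ M N where
  Ψ := PhiMap σ Y₀ φ
  meas := PhiMap_meas hY₀m (fun g => (hME.σ_mp g).measurable) hφmeas
  ne := by
    intro ω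
    rw [PhiMap]
    split
    · exact lmul_nonempty (hφne _)
    · exact ⟨1, Finset.mem_singleton_self 1⟩
  equiv := by
    intro g₀
    filter_upwards [hY₀fund] with ω hω
    have hω' : ∃! g : G, σ g (σ g₀ ω) ∈ Y₀ := U_sigma_inv hME hω g₀
    rw [PhiMap, PhiMap, if_pos hω, if_pos hω', rmap_sigma hME hω g₀]
    have e1 : σ (rmap σ Y₀ ω * g₀⁻¹) (σ g₀ ω) = σ (rmap σ Y₀ ω) ω := by
      rw [sigma_apply_mul hME]
      simp [mul_assoc]
    rw [e1, lmul_lmul]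
    congr 1
    have : ((QuotientGroup.mk (rmap σ Y₀ ω * g₀⁻¹) : G ⧸ M))⁻¹ =
        (QuotientGroup.mk g₀ : G ⧸ M) * ((QuotientGroup.mk (rmap σ Y₀ ω) : G ⧸ M))⁻¹ := by
      simp only [QuotientGroup.mk_mul, QuotientGroup.mk_inv, mul_inv_rev, inv_inv]
    rw [this]
  inv := by
    intro n
    -- the conull set of full properties at the `Y₀`-representative
    have hGood : ∀ᵐ x ∂m, x ∈ Y₀ → ((a (n : H) x ∈ Y₀ ∧ a (n : H) x = τ (n : H) (σ (c (n : H) x) x)) ∧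
        (φ (a (n : H) x) : Set (G ⧸ M)) =
          (fun u => (QuotientGroup.mk (c (n : H) x) : G ⧸ M) * u) '' (φ x : Set (G ⧸ M))) := by
      have h1 := ae_imp_of_ae_restrict (h_ind (n : H))
      have h2 := ae_imp_of_ae_restrict (hφequiv n)
      filter_upwards [h1, h2] with x e1 e2 hx
      exact ⟨e1 hx, e2 hx⟩
    have hGoodAll : ∀ᵐ ω ∂m, ∀ g : G, (σ g ω ∈ Y₀ →
        ((a (n : H) (σ g ω) ∈ Y₀ ∧
          a (n : H) (σ g ω) = τ (n : H) (σ (c (n : H) (σ g ω)) (σ g ω))) ∧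
        (φ (a (n : H) (σ g ω)) : Set (G ⧸ M)) =
          (fun u => (QuotientGroup.mk (c (n : H) (σ g ω)) : G ⧸ M) * u) ''
            (φ (σ g ω) : Set (G ⧸ M)))) :=
      ae_all_iff.2 fun g => ae_comp (hME.σ_mp g) hGood
    filter_upwards [hY₀fund, ae_comp (hME.τ_mp (n : H)) hY₀fund, hGoodAll] with ω hω hωτ hG
    set r := rmap σ Y₀ ω with hr
    set y := σ r ω with hy
    have hyY₀ : y ∈ Y₀ := rmap_spec hω
    obtain ⟨⟨hind1, hind2⟩, hequiv⟩ := hG r hyY₀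
    set cy := c (n : H) y with hcy
    -- the new representative
    have hind2' : a (n : H) y = τ (n : H) (σ cy y) := hind2
    have hkey : σ (cy * r) (τ (n : H) ω) = a (n : H) y := by
      rw [← sigma_apply_mul hME]
      have e1 : σ r (τ (n : H) ω) = τ (n : H) y := by
        rw [hy]; exact sigma_tau_comm hME r (n : H) ω
      rw [e1, hind2']
      exact sigma_tau_comm hME cy (n : H) y
    have hkeyY₀ : σ (cy * r) (τ (n : H) ω) ∈ Y₀ := by rw [hkey]; exact hind1
    have hrτ : rmap σ Y₀ (τ (n : H) ω) = cy * r := (rmap_unique hωτ hkeyY₀).symm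
    -- now compute
    rw [PhiMap, PhiMap, if_pos hωτ, if_pos hω, hrτ, hkey, ← hr, ← hy]
    have hφa : φ (a (n : H) y) = lmul (QuotientGroup.mk cy) (φ y) := by
      have hc : (↑(lmul (QuotientGroup.mk cy : G ⧸ M) (φ y)) : Set (G ⧸ M)) =
          (fun u => (QuotientGroup.mk cy : G ⧸ M) * u) '' ↑(φ y) := by
        classical
        simp [lmul, Finset.coe_image]
      apply Finset.coe_injective
      rw [hc]
      exact hequiv
    rw [hφa, lmul_lmul]
    congr 1
    simp only [QuotientGroup.mk_mul, QuotientGroup.mk_inv, mul_inv_rev, inv_inv]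
    group

end Front


section Back

variable {G H Ω : Type*} [Group G] [Countable G] [Group H] [Countable H]
  [MeasurableSpace G] [MeasurableSingletonClass G]
  [MeasurableSpace Ω] {M : Subgroup G} [M.Normal] {N : Subgroup H}
  {m : Measure Ω} {σ : G → Ω → Ω} {τ : H → Ω → Ω}
  (hME : MECoupling G H m σ τ)

include hME

theorem final_construction
    {Y₀ : Set Ω} (hY₀m : MeasurableSet Y₀)
    (hY₀fund : ∀ᵐ ω ∂m, ∃! g : G, σ g ω ∈ Y₀)
    (c : H → Ω → G) (hc_meas : ∀ h, Measurable (c h))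
    (a : H → Ω → Ω)
    (h_ind : ∀ h : H, ∀ᵐ ω ∂m.restrict Y₀, a h ω ∈ Y₀ ∧ a h ω = τ h (σ (c h ω) ω))
    (E : Ω → G ⧸ M) (hEmeas : ∀ u : G ⧸ M, MeasurableSet {ω | E ω = u})
    (hEg : ∀ g : G, ∀ᵐ ω ∂m, E (σ g ω) = QuotientGroup.mk g * E ω)
    (hEn : ∀ n : N, ∀ᵐ ω ∂m, E (τ (n : H) ω) = E ω) :
    ∃ Y : Set Ω, MeasurableSet Y ∧ (∀ᵐ ω ∂m, ∃! g : G, σ g ω ∈ Y) ∧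
      (⋃ n : N, τ (n : H) '' Y) ⊆ ⋃ q : M, σ (q : G) '' Y := by
  classical
  haveI : Countable (G ⧸ M) := Quotient.countable
  -- the section of the quotient map
  set eps : Ω → G := fun x => (E x).out with heps_def
  have heps : ∀ x : Ω, (QuotientGroup.mk (eps x) : G ⧸ M) = E x := fun x =>
    QuotientGroup.out_eq' (E x)
  have hepsmeas : ∀ g : G, MeasurableSet {x | eps x = g} := by
    intro g
    have : {x | eps x = g} = ⋃ (u : G ⧸ M) (_ : u.out = g), {x | E x = u} := by
      ext x
      simp only [Set.mem_setOf_eq, Set.mem_iUnion, heps_def]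
      constructor
      · intro h; exact ⟨E x, h, rfl⟩
      · rintro ⟨u, hu, hux⟩; rw [hux]; exact hu
    rw [this]
    exact MeasurableSet.iUnion fun u => MeasurableSet.iUnion fun _ => hEmeas u
  -- the base good set
  set U : Set Ω := fdGood σ Y₀ with hU_def
  have hUm : MeasurableSet U := fdGood_measurable (fun g => (hME.σ_mp g).measurable) hY₀m
  set C2 : G → Set Ω := fun g => {ω | E (σ g ω) = QuotientGroup.mk g * E ω} with hC2_def
  have hC2m : ∀ g, MeasurableSet (C2 g) := by
    intro g
    have : C2 g = ⋃ u : G ⧸ M, ((σ g ⁻¹' {x | E x = QuotientGroup.mk g * u}) ∩ {x | E x = u}) := by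
      ext ω
      simp only [hC2_def, Set.mem_setOf_eq, Set.mem_iUnion, Set.mem_inter_iff, Set.mem_preimage]
      constructor
      · intro h; exact ⟨E ω, h, rfl⟩
      · rintro ⟨u, h1, h2⟩; rw [h2]; exact h1
    rw [this]
    exact MeasurableSet.iUnion fun u =>
      ((hME.σ_mp g).measurable (hEmeas _)).inter (hEmeas u)
  set C3 : ↥N → Set Ω := fun n => {ω | E (τ (n : H) ω) = E ω} with hC3_def
  have hC3m : ∀ n, MeasurableSet (C3 n) := by
    intro n
    have : C3 n = ⋃ u : G ⧸ M, ((τ (n : H) ⁻¹' {x | E x = u}) ∩ {x | E x = u}) := by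
      ext ω
      simp only [hC3_def, Set.mem_setOf_eq, Set.mem_iUnion, Set.mem_inter_iff, Set.mem_preimage]
      constructor
      · intro h; exact ⟨E ω, h, rfl⟩
      · rintro ⟨u, h1, h2⟩; rw [h2]; exact h1
    rw [this]
    exact MeasurableSet.iUnion fun u =>
      ((hME.τ_mp (n : H)).measurable (hEmeas u)).inter (hEmeas u)
  set C4 : ↥N → Set Ω := fun n => {ω | ω ∈ Y₀ → σ (c (n : H) ω) (τ (n : H) ω) ∈ Y₀}
    with hC4_def
  have hC4m : ∀ n, MeasurableSet (C4 n) := by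
    intro n
    have : C4 n = Y₀ᶜ ∪ ⋃ g : G, ({ω | c (n : H) ω = g} ∩
        (fun ω => σ g (τ (n : H) ω)) ⁻¹' Y₀) := by
      ext ω
      simp only [hC4_def, Set.mem_setOf_eq, Set.mem_union, Set.mem_compl_iff, Set.mem_iUnion,
        Set.mem_inter_iff, Set.mem_preimage]
      constructor
      · intro h
        by_cases hω : ω ∈ Y₀
        · exact Or.inr ⟨c (n : H) ω, rfl, h hω⟩
        · exact Or.inl hω
      · rintro (h | ⟨g, hg, hY⟩) hω
        · exact absurd hω h
        · rw [hg]; exact hY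
    rw [this]
    refine hY₀m.compl.union (MeasurableSet.iUnion fun g => ?_)
    exact ((hc_meas (n : H)) (measurableSet_singleton g)).inter
      (((hME.σ_mp g).measurable.comp (hME.τ_mp (n : H)).measurable) hY₀m)
  set C : Set Ω := U ∩ ((⋂ g : G, C2 g) ∩ ((⋂ n : ↥N, C3 n) ∩ (⋂ n : ↥N, C4 n))) with hC_def
  have hCm : MeasurableSet C :=
    hUm.inter (((MeasurableSet.iInter hC2m).inter
      ((MeasurableSet.iInter hC3m).inter (MeasurableSet.iInter hC4m))))
  have hCco : ∀ᵐ ω ∂m, ω ∈ C := by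
    have h2 : ∀ᵐ ω ∂m, ∀ g : G, ω ∈ C2 g := ae_all_iff.2 fun g => hEg g
    have h3 : ∀ᵐ ω ∂m, ∀ n : ↥N, ω ∈ C3 n := ae_all_iff.2 fun n => hEn n
    have h4 : ∀ᵐ ω ∂m, ∀ n : ↥N, ω ∈ C4 n := by
      refine ae_all_iff.2 fun n => ?_
      filter_upwards [ae_imp_of_ae_restrict (h_ind (n : H))] with ω hω hωY₀
      obtain ⟨h1, h2⟩ := hω hωY₀
      rw [sigma_tau_comm hME, ← h2]
      exact h1
    filter_upwards [hY₀fund, h2, h3, h4] with ω e1 e2 e3 e4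
    exact ⟨e1, Set.mem_iInter.2 e2, Set.mem_iInter.2 e3, Set.mem_iInter.2 e4⟩
  -- the invariant conull refinement
  set step : (G ⊕ ↥N) → Ω → Ω := fun s x => match s with
    | Sum.inl g => σ g x
    | Sum.inr n => τ (n : H) x
    with hstep_def
  have hstep_mp : ∀ s, MeasurePreserving (step s) m m := by
    rintro (g | n)
    · exact hME.σ_mp g
    · exact hME.τ_mp _
  set act : List (G ⊕ ↥N) → Ω → Ω := fun L ω => L.foldr step ω with hact_def
  have hact_mp : ∀ L, MeasurePreserving (act L) m m := by
    intro L
    induction L with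
    | nil => exact MeasurePreserving.id m
    | cons s L ih =>
      have : act (s :: L) = step s ∘ act L := rfl
      rw [this]
      exact (hstep_mp s).comp ih
  have hact_append : ∀ (L : List (G ⊕ ↥N)) (s : G ⊕ ↥N) (ω : Ω),
      act (L ++ [s]) ω = act L (step s ω) := by
    intro L s ω
    simp only [hact_def, List.foldr_append, List.foldr_cons, List.foldr_nil]
  set Ω' : Set Ω := ⋂ L : List (G ⊕ ↥N), act L ⁻¹' C with hΩ'_def
  have hΩ'm : MeasurableSet Ω' :=
    MeasurableSet.iInter fun L => (hact_mp L).measurable hCm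
  have hΩ'co : ∀ᵐ ω ∂m, ω ∈ Ω' := by
    have : ∀ᵐ ω ∂m, ∀ L : List (G ⊕ ↥N), act L ω ∈ C :=
      ae_all_iff.2 fun L => ae_comp (hact_mp L) hCco
    filter_upwards [this] with ω hω
    exact Set.mem_iInter.2 fun L => hω L
  have hΩ'σ : ∀ (g : G) (ω : Ω), ω ∈ Ω' → σ g ω ∈ Ω' := by
    intro g ω hω
    refine Set.mem_iInter.2 fun L => ?_
    have : act L (σ g ω) = act (L ++ [Sum.inl g]) ω := (hact_append L (Sum.inl g) ω).symm
    simp only [Set.mem_preimage, this]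
    exact Set.mem_iInter.1 hω _
  have hΩ'τ : ∀ (n : ↥N) (ω : Ω), ω ∈ Ω' → τ (n : H) ω ∈ Ω' := by
    intro n ω hω
    refine Set.mem_iInter.2 fun L => ?_
    have : act L (τ (n : H) ω) = act (L ++ [Sum.inr n]) ω := (hact_append L (Sum.inr n) ω).symm
    simp only [Set.mem_preimage, this]
    exact Set.mem_iInter.1 hω _
  have hΩ'C : Ω' ⊆ C := fun ω hω => by
    have := Set.mem_iInter.1 hω []
    simpa [hact_def] using this
  have hΩ'U : ∀ ω, ω ∈ Ω' → (∃! g : G, σ g ω ∈ Y₀) := fun ω hω => (hΩ'C hω).1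
  have hΩ'E : ∀ ω, ω ∈ Ω' → ∀ g : G, E (σ g ω) = QuotientGroup.mk g * E ω := by
    intro ω hω g
    exact Set.mem_iInter.1 (hΩ'C hω).2.1 g
  have hΩ'En : ∀ ω, ω ∈ Ω' → ∀ n : ↥N, E (τ (n : H) ω) = E ω := by
    intro ω hω n
    exact Set.mem_iInter.1 (hΩ'C hω).2.2.1 n
  have hΩ'c : ∀ ω, ω ∈ Ω' → ∀ n : ↥N, ω ∈ Y₀ → σ (c (n : H) ω) (τ (n : H) ω) ∈ Y₀ := by
    intro ω hω n
    exact Set.mem_iInter.1 (hΩ'C hω).2.2.2 n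
  have hΩ'τinv : ∀ (n : ↥N) (ω : Ω), ω ∉ Ω' → τ (n : H) ω ∉ Ω' := by
    intro n ω hω hτ
    apply hω
    have e : τ ((n⁻¹ : ↥N) : H) (τ (n : H) ω) = ω := by
      rw [tau_apply_mul hME]
      have : ((n⁻¹ : ↥N) : H) * (n : H) = 1 := by
        rw [← Subgroup.coe_mul, inv_mul_cancel, Subgroup.coe_one]
      rw [this, hME.τ_one]
      rfl
    rw [← e]
    exact hΩ'τ n⁻¹ _ hτ
  -- the fundamental domain
  set Y₁ : Set Ω := {ω | ω ∈ Ω' ∧ rmap σ Y₀ ω = eps (σ (rmap σ Y₀ ω) ω)} with hY₁_def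
  have hY₁eq : Y₁ = Ω' ∩ ⋃ g : G, (σ g ⁻¹' Y₀ ∩ σ g ⁻¹' {x | eps x = g}) := by
    ext ω
    simp only [hY₁_def, Set.mem_setOf_eq, Set.mem_inter_iff, Set.mem_iUnion, Set.mem_preimage]
    constructor
    · rintro ⟨hω, hcond⟩
      exact ⟨hω, rmap σ Y₀ ω, rmap_spec (hΩ'U ω hω), hcond.symm⟩
    · rintro ⟨hω, g, hgY, hge⟩
      have : g = rmap σ Y₀ ω := rmap_unique (hΩ'U ω hω) hgY
      rw [← this]
      exact ⟨hω, hge.symm⟩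
  have hY₁m : MeasurableSet Y₁ := by
    rw [hY₁eq]
    exact hΩ'm.inter (MeasurableSet.iUnion fun g =>
      ((hME.σ_mp g).measurable hY₀m).inter ((hME.σ_mp g).measurable (hepsmeas g)))
  -- the pattern: the selected point over a good `y ∈ Y₀ ∩ Ω'`
  have claimA : ∀ y : Ω, y ∈ Y₀ → y ∈ Ω' →
      (σ (eps y)⁻¹ y ∈ Y₁ ∧ rmap σ Y₀ (σ (eps y)⁻¹ y) = eps y) := by
    intro y hyY hyΩ
    have hωΩ : σ (eps y)⁻¹ y ∈ Ω' := hΩ'σ _ _ hyΩ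
    have he : σ (eps y) (σ (eps y)⁻¹ y) = y := by
      rw [sigma_apply_mul hME, mul_inv_cancel, hME.σ_one]
      rfl
    have hY : σ (eps y) (σ (eps y)⁻¹ y) ∈ Y₀ := by rw [he]; exact hyY
    have hr : rmap σ Y₀ (σ (eps y)⁻¹ y) = eps y :=
      (rmap_unique (hΩ'U _ hωΩ) hY).symm
    refine ⟨⟨hωΩ, ?_⟩, hr⟩
    rw [hr, he]
  set Y : Set Ω := Y₁ ∪ Ω'ᶜ with hY_def
  refine ⟨Y, hY₁m.union hΩ'm.compl, ?_, ?_⟩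
  · -- fundamental domain property
    filter_upwards [hΩ'co] with ω hω
    have hmem : ∀ g : G, (σ g ω ∈ Y ↔ σ g ω ∈ Y₁) := by
      intro g
      simp only [hY_def, Set.mem_union, Set.mem_compl_iff]
      constructor
      · rintro (h | h)
        · exact h
        · exact absurd (hΩ'σ g ω hω) h
      · intro h; exact Or.inl h
    set r := rmap σ Y₀ ω with hr_def
    set y := σ r ω with hy_def
    have hyY : y ∈ Y₀ := rmap_spec (hΩ'U ω hω)
    have hyΩ : y ∈ Ω' := hΩ'σ r ω hω
    obtain ⟨hA1, hA2⟩ := claimA y hyY hyΩ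
    refine ⟨(eps y)⁻¹ * r, ?_, ?_⟩
    · show σ ((eps y)⁻¹ * r) ω ∈ Y
      rw [hmem ((eps y)⁻¹ * r)]
      have : σ ((eps y)⁻¹ * r) ω = σ (eps y)⁻¹ y := by
        rw [← sigma_apply_mul hME, ← hy_def]
      rw [this]
      exact hA1
    · intro g hg
      have hg' : σ g ω ∈ Y := hg
      rw [hmem g] at hg'
      obtain ⟨hgΩ, hgcond⟩ := hg'
      have hrσ : rmap σ Y₀ (σ g ω) = r * g⁻¹ := rmap_sigma hME (hΩ'U ω hω) g
      have hyg : σ (rmap σ Y₀ (σ g ω)) (σ g ω) = y := by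
        rw [hrσ, sigma_apply_mul hME, hy_def]
        congr 1
        group
      rw [hyg, hrσ] at hgcond
      -- hgcond : r * g⁻¹ = eps y
      rw [← hgcond]
      group
  · -- the inclusion
    rintro ω₀ hω₀
    rw [Set.mem_iUnion] at hω₀
    obtain ⟨n, hn⟩ := hω₀
    rw [Set.mem_image] at hn
    obtain ⟨ω, hωY, rfl⟩ := hn
    rw [Set.mem_iUnion]
    rcases hωY with hωY₁ | hωΩc
    swap
    · -- the null part
      refine ⟨1, ?_⟩
      rw [Set.mem_image]
      refine ⟨τ (n : H) ω, Or.inr (hΩ'τinv n ω hωΩc), ?_⟩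
      rw [Subgroup.coe_one, hME.σ_one]
      rfl
    · obtain ⟨hωΩ, hωcond⟩ := hωY₁
      set r := rmap σ Y₀ ω with hr_def
      set y := σ r ω with hy_def
      have hyY : y ∈ Y₀ := rmap_spec (hΩ'U ω hωΩ)
      have hyΩ : y ∈ Ω' := hΩ'σ r ω hωΩ
      -- hωcond : r = eps y
      set cy := c (n : H) y with hcy_def
      set y' := σ cy (τ (n : H) y) with hy'_def
      have hy'Y : y' ∈ Y₀ := hΩ'c y hyΩ n hyY
      have hy'Ω : y' ∈ Ω' := hΩ'σ cy _ (hΩ'τ n y hyΩ)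
      have hEy' : E y' = QuotientGroup.mk cy * E y := by
        rw [hy'_def, hΩ'E _ (hΩ'τ n y hyΩ) cy, hΩ'En y hyΩ n]
      obtain ⟨hA1, hA2⟩ := claimA y' hy'Y hy'Ω
      set q := r⁻¹ * cy⁻¹ * eps y' with hq_def
      have hp : σ (cy * r) (τ (n : H) ω) = y' := by
        rw [hy'_def, ← sigma_apply_mul hME]
        congr 1
        rw [hy_def]
        exact sigma_tau_comm hME r (n : H) ω
      have hq1 : σ q (σ (eps y')⁻¹ y') = τ (n : H) ω := by
        calc σ q (σ (eps y')⁻¹ y') = σ (q * (eps y')⁻¹) y' := sigma_apply_mul hME _ _ _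
          _ = σ (r⁻¹ * cy⁻¹) y' := by
              congr 1
              rw [hq_def]; group
          _ = σ (r⁻¹ * cy⁻¹) (σ (cy * r) (τ (n : H) ω)) := by rw [hp]
          _ = σ (r⁻¹ * cy⁻¹ * (cy * r)) (τ (n : H) ω) := sigma_apply_mul hME _ _ _
          _ = τ (n : H) ω := by
              rw [show r⁻¹ * cy⁻¹ * (cy * r) = 1 by group, hME.σ_one]
              rfl
      have hqM : q ∈ M := by
        rw [← QuotientGroup.eq_one_iff]
        have e1 : (QuotientGroup.mk r : G ⧸ M) = E y := by
          rw [hωcond]; exact heps y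
        have e2 : (QuotientGroup.mk (eps y') : G ⧸ M) = QuotientGroup.mk cy * E y := by
          rw [heps, hEy']
        rw [hq_def]
        simp only [QuotientGroup.mk_mul, QuotientGroup.mk_inv, e1, e2]
        group
      refine ⟨⟨q, hqM⟩, ?_⟩
      rw [Set.mem_image]
      exact ⟨σ (eps y')⁻¹ y', Or.inl hA1, hq1⟩

end Back

end MEICCProof

/-- Lemma `lem:ME_ICC_quotient`. Let `M ⊴ G`, `N ⊴ H` with `Ḡ = G/M` ICC,
let `(Ω,m)` be an ME-coupling of `G` and `H` with fundamental domain `Y₀` for the `G`-action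
and associated ME-cocycle `c : H × Y₀ → G`, and let `c̄` be its composition with `G → Ḡ`.
If `c̄|(N × Y₀)` is essentially trivial, then there is a fundamental domain `Y ⊆ Ω` for the
`G`-action with `NY ⊆ MY`. -/
theorem exists_fundamental_domain_of_essTrivial_quotient_cocycle
    {G H Ω : Type*} [Group G] [Countable G] [Group H] [Countable H]
    [MeasurableSpace G] [MeasurableSingletonClass G]
    [MeasurableSpace Ω] (m : Measure Ω)
    (σ : G → Ω → Ω) (τ : H → Ω → Ω)
    (hME : MECoupling G H m σ τ)
    (M : Subgroup G) [M.Normal] (N : Subgroup H) [N.Normal]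
    (hICC : IsICC (G ⧸ M))
    (Y₀ : Set Ω) (hY₀_meas : MeasurableSet Y₀) (hY₀_fin : m Y₀ < ⊤)
    (hY₀_fund : ∀ᵐ ω ∂m, ∃! g : G, σ g ω ∈ Y₀)
    -- the induced action of `H` on `Y₀` and the associated ME-cocycle `c : H × Y₀ → G`:
    (a : H → Ω → Ω) (c : H → Ω → G)
    (ha_meas : ∀ h, Measurable (a h)) (hc_meas : ∀ h, Measurable (c h))
    (h_ind : ∀ h, ∀ᵐ ω ∂m.restrict Y₀, a h ω ∈ Y₀ ∧ a h ω = τ h (σ (c h ω) ω))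
    (h_triv : EssTrivialCocycle (m.restrict Y₀) (fun (n : N) ω => a (n : H) ω)
      (fun (n : N) ω => (QuotientGroup.mk (c (n : H) ω) : G ⧸ M))) :
    ∃ Y : Set Ω, MeasurableSet Y ∧ (∀ᵐ ω ∂m, ∃! g : G, σ g ω ∈ Y) ∧
      (⋃ n : N, τ (n : H) '' Y) ⊆ ⋃ a : M, σ (a : G) '' Y := by
  classical
  obtain ⟨φ, hφmeas, hφne, hφequiv⟩ := h_triv
  have hφequiv' : ∀ n : N, ∀ᵐ x ∂m.restrict Y₀,
      (φ (a (n : H) x) : Set (G ⧸ M)) =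
        (fun u => (QuotientGroup.mk (c (n : H) x) : G ⧸ M) * u) '' (φ x : Set (G ⧸ M)) :=
    fun n => hφequiv n
  have P₀ : MEICCProof.GoodMap m σ τ M N :=
    MEICCProof.PhiGoodMap hME hY₀_meas hY₀_fund a c h_ind hφmeas hφne hφequiv'
  obtain ⟨E, hEmeas, hEg, hEn⟩ :=
    MEICCProof.exists_E hME hICC P₀ hY₀_meas hY₀_fin hY₀_fund
  exact MEICCProof.final_construction hME hY₀_meas hY₀_fund c hc_meas a h_ind E hEmeas hEg hEn
end
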